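/- arXiv:1903.04266 — 5 statements merged into one kernel-verified Lean document; each statement's English description precedes it below -/
import Mathlib

section
/- Let k be a field that is not algebraic over a finite subfield, and let R be a k-algebra. If R has at least one nonartinian primitive subquotient, i.e., there exist a k-subalgebra A of R and a two-sided ideal I of A such that the quotient ring A/I is left primitive and not left artinian, then R contains a free noncyclic subsemigroup. -/
universe u v

/-- A ring (or semigroup) `R` contains a free noncyclic subsemigroup if there
are `x y : R` such that the multiplicative subsemigroup they generate is free
on `{x, y}`, i.e. the canonical semigroup homomorphism from the free semigroup
on two generators sending the generators to `x` and `y` is injective. -/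
def HasFreeNoncyclicSubsemigroup (R : Type*) [Semigroup R] : Prop :=
  ∃ x y : R, Function.Injective
    ⇑(FreeSemigroup.lift (fun b : Bool => if b then x else y))

/-- A field `k` is not algebraic over a finite subfield if there is no finite
subfield `F` of `k` such that every element of `k` is algebraic over `F`. -/
def NotAlgebraicOverFiniteSubfield (k : Type*) [Field k] : Prop :=
  ¬ ∃ F : Subfield k, Finite F ∧ ∀ x : k, IsAlgebraic F x

/-- A ring is left primitive if it has a faithful simple left module. -/
def IsLeftPrimitiveRing (R : Type u) [Ring R] : Prop :=
  ∃ (M : Type u) (_ : AddCommGroup M) (_ : Module R M),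
    IsSimpleModule R M ∧ FaithfulSMul R M

section Arith

/-- key integer fact: a `{-1,0,1}`-combination of powers of 2 with nonzero top
coefficient is nonzero. -/
lemma int_aux (n : ℕ) (δ : ℕ → ℤ) (hδ : ∀ i, δ i = -1 ∨ δ i = 0 ∨ δ i = 1)
    (hn : δ n ≠ 0) : ∑ i ∈ Finset.range (n + 1), δ i * 2 ^ i ≠ 0 := by
  have habs : ∀ i, |δ i| ≤ 1 := by
    intro i; rcases hδ i with h | h | h <;> simp [h]
  have hgeom : ∀ m : ℕ, ∑ i ∈ Finset.range m, (2 : ℤ) ^ i = 2 ^ m - 1 := by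
    intro m; induction m with
    | zero => simp
    | succ m ih => rw [Finset.sum_range_succ, ih]; ring
  have hbound : |∑ i ∈ Finset.range n, δ i * 2 ^ i| ≤ 2 ^ n - 1 := by
    calc |∑ i ∈ Finset.range n, δ i * 2 ^ i| ≤ ∑ i ∈ Finset.range n, |δ i * 2 ^ i| :=
          Finset.abs_sum_le_sum_abs _ _
      _ ≤ ∑ i ∈ Finset.range n, (2:ℤ) ^ i := by
          apply Finset.sum_le_sum
          intro i _
          rw [abs_mul, abs_pow]
          calc |δ i| * |(2:ℤ)| ^ i ≤ 1 * |(2:ℤ)| ^ i := by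
                apply mul_le_mul_of_nonneg_right (habs i) (by positivity)
            _ = 2 ^ i := by norm_num
      _ = 2 ^ n - 1 := hgeom n
  intro h
  rw [Finset.sum_range_succ] at h
  have htop : |δ n * 2 ^ n| = 2 ^ n := by
    rcases hδ n with h' | h' | h' <;> simp [h'] at hn ⊢ <;> positivity
  have : δ n * 2 ^ n = -∑ i ∈ Finset.range n, δ i * 2 ^ i := by linarith
  rw [this, abs_neg] at htop
  have := hbound
  rw [htop] at this
  have h2 : (0:ℤ) < 2 ^ n := by positivity
  linarith

/-- From the hypothesis on `k`, produce `t : k` on which no nonzero `{-1,0,1}`-polynomial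
vanishes. -/
lemma exists_good_t {k : Type v} [Field k] (hk : NotAlgebraicOverFiniteSubfield k) :
    ∃ t : k, ∀ (n : ℕ) (δ : ℕ → ℤ), (∀ i, δ i = -1 ∨ δ i = 0 ∨ δ i = 1) → δ n ≠ 0 →
      ∑ i ∈ Finset.range (n + 1), (δ i : k) * t ^ i ≠ 0 := by
  haveI : CharP k (ringChar k) := ringChar.charP k
  rcases CharP.char_is_prime_or_zero k (ringChar k) with hp | h0
  · -- positive characteristic p
    set p := ringChar k with hpdef
    haveI := Fact.mk hp
    haveI : NeZero p := ⟨hp.ne_zero⟩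
    let f : ZMod p →+* k := ZMod.castHom (dvd_refl p) k
    by_contra hcon
    push_neg at hcon
    apply hk
    refine ⟨f.fieldRange, ?_, ?_⟩
    · have : (f.fieldRange : Set k).Finite := by
        rw [RingHom.coe_fieldRange]
        exact Set.finite_range f
      exact this.to_subtype
    · intro t
      obtain ⟨n, δ, hδ, hn, hsum⟩ := hcon t
      classical
      refine ⟨∑ i ∈ Finset.range (n + 1),
        Polynomial.C (⟨(δ i : k), intCast_mem f.fieldRange (δ i)⟩ : f.fieldRange) *
          Polynomial.X ^ i, ?_, ?_⟩
      · intro hq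
        have hcoeff := congrArg (fun q => Polynomial.coeff q n) hq
        simp only [Polynomial.finset_sum_coeff, Polynomial.coeff_C_mul, Polynomial.coeff_X_pow,
          Polynomial.coeff_zero] at hcoeff
        rw [Finset.sum_eq_single n] at hcoeff
        · simp only [if_pos rfl, mul_one] at hcoeff
          have hval : ((δ n : k)) = 0 := by
            have := congrArg Subtype.val hcoeff
            simpa using this
          rcases hδ n with h' | h' | h' <;> simp [h'] at hval hn
        · intro b _ hb
          simp [if_neg (fun hh : n = b => hb hh.symm)]
        · intro hb
          exact absurd (Finset.self_mem_range_succ n) hb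
      · rw [map_sum]
        rw [← hsum]
        apply Finset.sum_congr rfl
        intro i _
        rw [map_mul, map_pow, Polynomial.aeval_C, Polynomial.aeval_X]
        rfl
  · -- characteristic zero
    haveI : CharP k 0 := h0 ▸ ringChar.charP k
    haveI : CharZero k := CharP.charP_to_charZero k
    refine ⟨2, fun n δ hδ hn h => ?_⟩
    apply int_aux n δ hδ hn
    have : ((∑ i ∈ Finset.range (n + 1), δ i * 2 ^ i : ℤ) : k) = 0 := by
      push_cast
      exact h
    exact_mod_cast this

end Arith

section Words

variable {k : Type v} [Field k]

/-- integer indicator of a boolean -/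
def indZ (b : Bool) : ℤ := if b then 1 else 0

/-- "base `t`" value of a list of booleans, least significant digit first. -/
def valT (t : k) : List Bool → k
  | [] => 0
  | b :: L => ((indZ b : ℤ) : k) + t * valT t L

lemma valT_nil (t : k) : valT t ([] : List Bool) = 0 := rfl

lemma valT_cons (t : k) (b : Bool) (L : List Bool) :
    valT t (b :: L) = ((indZ b : ℤ) : k) + t * valT t L := rfl

lemma valT_sum (t : k) : ∀ L : List Bool,
    valT t L = ∑ i ∈ Finset.range L.length, ((indZ (L.getD i false) : ℤ) : k) * t ^ i := by
  intro L
  induction L with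
  | nil => simp [valT]
  | cons b L ih =>
    rw [valT_cons, ih, List.length_cons, Finset.sum_range_succ']
    simp only [List.getD_cons_succ, List.getD_cons_zero, pow_zero, mul_one]
    rw [Finset.mul_sum, add_comm]
    congr 1
    apply Finset.sum_congr rfl
    intro i _
    ring

variable {t : k}
  (ht : ∀ (n : ℕ) (δ : ℕ → ℤ), (∀ i, δ i = -1 ∨ δ i = 0 ∨ δ i = 1) → δ n ≠ 0 →
      ∑ i ∈ Finset.range (n + 1), (δ i : k) * t ^ i ≠ 0)

include ht

lemma pow_t_inj {n m : ℕ} (h : t ^ n = t ^ m) : n = m := by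
  by_contra hne
  wlog hlt : m < n generalizing n m
  · exact this h.symm (Ne.symm hne) (by omega)
  classical
  set δ : ℕ → ℤ := fun i => if i = n then 1 else if i = m then -1 else 0 with hδdef
  have hδ : ∀ i, δ i = -1 ∨ δ i = 0 ∨ δ i = 1 := by
    intro i
    by_cases h1 : i = n
    · simp [hδdef, h1]
    · by_cases h2 : i = m <;> simp [hδdef, h1, h2, hlt.ne]
  have hn : δ n ≠ 0 := by simp [hδdef]
  apply ht n δ hδ hn
  have heach : ∀ i, ((δ i : ℤ) : k) * t ^ i =
      (if i = n then t ^ n else 0) + (if i = m then -t ^ m else 0) := by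
    intro i
    by_cases h1 : i = n
    · by_cases h2 : i = m
      · omega
      · simp [hδdef, h1, h2, hne]
    · by_cases h2 : i = m
      · simp [hδdef, h1, h2, (show ¬ m = n by omega)]
      · simp [hδdef, h1, h2]
  rw [Finset.sum_congr rfl (fun i _ => heach i), Finset.sum_add_distrib,
    Finset.sum_ite_eq' (Finset.range (n+1)) n (fun i => t ^ n),
    Finset.sum_ite_eq' (Finset.range (n+1)) m (fun i => -t ^ m)]
  have h1 : n ∈ Finset.range (n+1) := Finset.self_mem_range_succ n
  have h2 : m ∈ Finset.range (n+1) := Finset.mem_range.2 (by omega)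
  rw [if_pos h1, if_pos h2]
  rw [h]
  ring

lemma valT_inj {L L' : List Bool} (hlen : L.length = L'.length)
    (hval : valT t L = valT t L') : L = L' := by
  classical
  by_contra hne
  set n := L.length with hn
  set S := (Finset.range n).filter (fun i => L.getD i false ≠ L'.getD i false) with hSdef
  have hS : S.Nonempty := by
    rw [Finset.filter_nonempty_iff]
    by_contra hc
    push_neg at hc
    apply hne
    apply List.ext_getElem hlen
    intro i hi1 hi2
    have := hc i (Finset.mem_range.2 hi1)
    rwa [List.getD_eq_getElem _ _ hi1, List.getD_eq_getElem _ _ hi2] at this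
  set j := S.max' hS with hj
  have hjS : j ∈ S := S.max'_mem hS
  have hjn : j < n := Finset.mem_range.1 (Finset.mem_filter.1 hjS).1
  set δ : ℕ → ℤ := fun i => indZ (L.getD i false) - indZ (L'.getD i false) with hδdef
  have key1 : ∀ a b : Bool, indZ a - indZ b = -1 ∨ indZ a - indZ b = 0 ∨ indZ a - indZ b = 1 := by
    decide
  have key2 : ∀ a b : Bool, a ≠ b → indZ a - indZ b ≠ 0 := by decide
  have hδ : ∀ i, δ i = -1 ∨ δ i = 0 ∨ δ i = 1 := by
    intro i
    exact key1 _ _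
  have hδj : δ j ≠ 0 := by
    exact key2 _ _ (Finset.mem_filter.1 hjS).2
  apply ht j δ hδ hδj
  have hzero : ∀ i, j < i → δ i = 0 := by
    intro i hji
    by_cases hin : i < n
    · have : i ∉ S := fun hiS => absurd (S.le_max' i hiS) (by omega)
      rw [hSdef, Finset.mem_filter] at this
      push_neg at this
      have heq := this (Finset.mem_range.2 hin)
      show indZ (L.getD i false) - indZ (L'.getD i false) = 0
      rw [heq, sub_self]
    · have h1 : L.getD i false = false := List.getD_eq_default _ _ (by omega)
      have h2 : L'.getD i false = false := List.getD_eq_default _ _ (by omega)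
      show indZ (L.getD i false) - indZ (L'.getD i false) = 0
      rw [h1, h2, sub_self]
  have hext : ∑ i ∈ Finset.range (j+1), ((δ i : ℤ) : k) * t ^ i
      = ∑ i ∈ Finset.range n, ((δ i : ℤ) : k) * t ^ i := by
    apply Finset.sum_subset
    · intro i hi
      rw [Finset.mem_range] at hi ⊢
      omega
    · intro i _ hi
      rw [Finset.mem_range, not_lt] at hi
      rw [hzero i (by omega)]
      simp
  rw [hext]
  have : ∑ i ∈ Finset.range n, ((δ i : ℤ) : k) * t ^ i = valT t L - valT t L' := by
    rw [valT_sum t L, valT_sum t L', ← hn, ← hlen, ← Finset.sum_sub_distrib]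
    apply Finset.sum_congr rfl
    intro i _
    push_cast [hδdef]
    ring
  rw [this, hval, sub_self]

end Words

section Core

variable {Q : Type u} [Ring Q] {k : Type v} [Field k]

lemma core_free (ψ : k →+* Q) (hcen : ∀ (c : k) (q : Q), ψ c * q = q * ψ c)
    {t : k}
    (ht : ∀ (n : ℕ) (δ : ℕ → ℤ), (∀ i, δ i = -1 ∨ δ i = 0 ∨ δ i = 1) → δ n ≠ 0 →
      ∑ i ∈ Finset.range (n + 1), (δ i : k) * t ^ i ≠ 0)
    (hptinj : ∀ {n m : ℕ}, t ^ n = t ^ m → n = m)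
    (hvinj : ∀ {L L' : List Bool}, L.length = L'.length → valT t L = valT t L' → L = L')
    (hprim : IsLeftPrimitiveRing Q) (hart : ¬ IsArtinianRing Q) :
    HasFreeNoncyclicSubsemigroup Q := by
  classical
  obtain ⟨M, i1, i2, hsimp, hfaith⟩ := hprim
  letI := i1
  letI := i2
  haveI := hsimp
  haveI := hfaith
  haveI : Nontrivial M := IsSimpleModule.nontrivial Q M
  have span_top : ∀ m : M, m ≠ 0 → ∀ u : M, ∃ q : Q, q • m = u := by
    intro m hm u
    have htop : Submodule.span Q ({m} : Set M) = ⊤ := by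
      rcases eq_bot_or_eq_top (Submodule.span Q ({m} : Set M)) with hbot | htop
      · exfalso
        apply hm
        have := Submodule.mem_span_singleton_self (R := Q) m
        rw [hbot] at this
        simpa using this
      · exact htop
    have hu : u ∈ Submodule.span Q ({m} : Set M) := htop ▸ Submodule.mem_top
    exact Submodule.mem_span_singleton.1 hu
  have hfaith' : ∀ q : Q, (∀ m : M, q • m = 0) → q = 0 := by
    intro q hq
    apply FaithfulSMul.eq_of_smul_eq_smul (M := Q) (α := M)
    intro m
    rw [hq m, zero_smul]
  have hψ : ∀ c : k, c ≠ 0 → ∀ m : M, m ≠ 0 → ψ c • m ≠ 0 := by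
    intro c hc m hm h0
    apply hm
    have h1 : (ψ c⁻¹ * ψ c) • m = 0 := by rw [mul_smul, h0, smul_zero]
    rwa [← map_mul, inv_mul_cancel₀ hc, map_one, one_smul] at h1
  by_cases hd : ∃ m₁ m₂ : M, m₁ ≠ 0 ∧ ∀ d : Module.End Q M, d m₁ ≠ m₂
  · obtain ⟨m₁, m₂, hm₁, hind⟩ := hd
    have hm₂ : m₂ ≠ 0 := by
      intro h0
      exact hind 0 (by simp [h0])
    -- there is q₀ killing m₁ but not m₂
    have hq₀ : ∃ q₀ : Q, q₀ • m₁ = 0 ∧ q₀ • m₂ ≠ 0 := by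
      by_contra hc
      push_neg at hc
      choose σ hσ using span_top m₁ hm₁
      have key : ∀ (q : Q) (m : M), q • m₁ = m → q • m₂ = σ m • m₂ := by
        intro q m hq
        have h1 : (q - σ m) • m₁ = 0 := by rw [sub_smul, hq, hσ m, sub_self]
        have h2 := hc _ h1
        rw [sub_smul, sub_eq_zero] at h2
        exact h2
      let d : Module.End Q M :=
        { toFun := fun m => σ m • m₂
          map_add' := by
            intro a b
            have h1 : (σ a + σ b) • m₂ = σ (a + b) • m₂ :=
              key _ _ (by rw [add_smul, hσ, hσ])
            show σ (a + b) • m₂ = σ a • m₂ + σ b • m₂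
            rw [← h1, add_smul]
          map_smul' := by
            intro q m
            simp only [RingHom.id_apply]
            have h1 := key (q * σ m) (q • m) (by rw [mul_smul, hσ])
            show σ (q • m) • m₂ = q • σ m • m₂
            rw [← h1, mul_smul] }
      apply hind d
      have h1 := key 1 m₁ (one_smul _ _)
      rw [one_smul] at h1
      show σ m₁ • m₂ = m₂
      exact h1.symm
    obtain ⟨q₀, hq₀₁, hq₀₂⟩ := hq₀
    -- there is q₁ killing m₂ but not m₁
    have hq₁ : ∃ q₁ : Q, q₁ • m₂ = 0 ∧ q₁ • m₁ ≠ 0 := by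
      by_contra hc
      push_neg at hc
      choose σ hσ using span_top m₂ hm₂
      have key : ∀ (q : Q) (m : M), q • m₂ = m → q • m₁ = σ m • m₁ := by
        intro q m hq
        have h1 : (q - σ m) • m₂ = 0 := by rw [sub_smul, hq, hσ m, sub_self]
        have h2 := hc _ h1
        rw [sub_smul, sub_eq_zero] at h2
        exact h2
      let d' : Module.End Q M :=
        { toFun := fun m => σ m • m₁
          map_add' := by
            intro a b
            have h1 : (σ a + σ b) • m₁ = σ (a + b) • m₁ :=
              key _ _ (by rw [add_smul, hσ, hσ])
            show σ (a + b) • m₁ = σ a • m₁ + σ b • m₁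
            rw [← h1, add_smul]
          map_smul' := by
            intro q m
            simp only [RingHom.id_apply]
            have h1 := key (q * σ m) (q • m) (by rw [mul_smul, hσ])
            show σ (q • m) • m₁ = q • σ m • m₁
            rw [← h1, mul_smul] }
      have hd'm₂ : d' m₂ = m₁ := by
        have h1 := key 1 m₂ (one_smul _ _)
        rw [one_smul] at h1
        exact h1.symm
      have hd'ne : d' ≠ 0 := by
        intro h0
        apply hm₁
        rw [← hd'm₂, h0, LinearMap.zero_apply]
      have hbij : Function.Bijective d' := LinearMap.bijective_of_ne_zero hd'ne
      let e := LinearEquiv.ofBijective d' hbij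
      apply hind e.symm.toLinearMap
      show e.symm m₁ = m₂
      rw [← hd'm₂]
      exact e.symm_apply_apply m₂
    obtain ⟨q₁, hq₁₂, hq₁₁⟩ := hq₁
    obtain ⟨r₁, hr₁⟩ := span_top _ hq₁₁ (ψ t • m₁)
    obtain ⟨r₂, hr₂⟩ := span_top _ hq₀₂ (m₁ + m₂)
    obtain ⟨r₃, hr₃⟩ := span_top _ hq₀₂ m₂
    set x : Q := r₁ * q₁ + r₂ * q₀ with hxdef
    set y : Q := r₁ * q₁ + r₃ * q₀ with hydef
    have hx₁ : x • m₁ = ψ t • m₁ := by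
      rw [hxdef, add_smul, mul_smul, mul_smul, hq₀₁, smul_zero, add_zero, hr₁]
    have hy₁ : y • m₁ = ψ t • m₁ := by
      rw [hydef, add_smul, mul_smul, mul_smul, hq₀₁, smul_zero, add_zero, hr₁]
    have hx₂ : x • m₂ = m₁ + m₂ := by
      rw [hxdef, add_smul, mul_smul, mul_smul, hq₁₂, smul_zero, zero_add, hr₂]
    have hy₂ : y • m₂ = m₂ := by
      rw [hydef, add_smul, mul_smul, mul_smul, hq₁₂, smul_zero, zero_add, hr₃]
    refine ⟨x, y, ?_⟩
    set g : Bool → Q := fun b => if b then x else y with hg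
    have hg₁ : ∀ b, g b • m₁ = ψ t • m₁ := by
      intro b
      cases b <;> simp [hg, hx₁, hy₁]
    have hg₂ : ∀ b, g b • m₂ = ψ ((indZ b : ℤ) : k) • m₁ + m₂ := by
      intro b
      cases b <;> simp [hg, hx₂, hy₂, indZ]
    have hcen' : ∀ (c : k) (q : Q) (m : M), q • ψ c • m = ψ c • q • m := by
      intro c q m
      rw [← mul_smul, ← mul_smul, hcen]
    have P1 : ∀ w : FreeSemigroup Bool,
        (FreeSemigroup.lift g w) • m₁ = ψ (t ^ w.length) • m₁ := by
      intro w
      induction w using FreeSemigroup.recOnMul with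
      | ih1 b => rw [FreeSemigroup.lift_of, hg₁ b, FreeSemigroup.length_of, pow_one]
      | ih2 b v _ ihv =>
        rw [map_mul, FreeSemigroup.lift_of, mul_smul, ihv, hcen', hg₁ b, ← mul_smul,
          ← map_mul, FreeSemigroup.length_mul, FreeSemigroup.length_of]
        congr 2
        ring
    set val : FreeSemigroup Bool → k := fun w => valT t (w.1 :: w.2) with hvaldef
    have hval_of : ∀ b, val (FreeSemigroup.of b) = ((indZ b : ℤ) : k) := by
      intro b
      show valT t [b] = _
      rw [valT, valT, mul_zero, add_zero]
    have hval_mul : ∀ (b : Bool) (v : FreeSemigroup Bool),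
        val (FreeSemigroup.of b * v) = ((indZ b : ℤ) : k) + t * val v := by
      intro b v
      show valT t (b :: v.1 :: v.2) = _
      rw [valT]
    have P2 : ∀ w : FreeSemigroup Bool,
        (FreeSemigroup.lift g w) • m₂ = ψ (val w) • m₁ + m₂ := by
      intro w
      induction w using FreeSemigroup.recOnMul with
      | ih1 b => rw [FreeSemigroup.lift_of, hg₂ b, hval_of b]
      | ih2 b v _ ihv =>
        rw [map_mul, FreeSemigroup.lift_of, mul_smul, ihv, hval_mul, smul_add, hcen',
          hg₁ b, hg₂ b, ← mul_smul, ← map_mul,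
          show val v * t = t * val v from mul_comm _ _, map_add, add_smul]
        abel
    intro w w' hww
    have h1 : ψ (t ^ w.length) • m₁ = ψ (t ^ w'.length) • m₁ := by
      rw [← P1 w, ← P1 w', hww]
    have hlen : w.length = w'.length := by
      apply hptinj (n := w.length) (m := w'.length)
      by_contra hne
      apply hψ (t ^ w.length - t ^ w'.length)
        (sub_ne_zero.2 hne) m₁ hm₁
      rw [map_sub, sub_smul, h1, sub_self]
    have h2 : ψ (val w) • m₁ + m₂ = ψ (val w') • m₁ + m₂ := by
      rw [← P2 w, ← P2 w', hww]
    have h3 : ψ (val w) • m₁ = ψ (val w') • m₁ := add_right_cancel h2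
    have hvv : val w = val w' := by
      by_contra hne
      apply hψ (val w - val w') (sub_ne_zero.2 hne) m₁ hm₁
      rw [map_sub, sub_smul, h3, sub_self]
    have hlist : (w.1 :: w.2) = (w'.1 :: w'.2) := by
      apply hvinj _ hvv
      show w.2.length + 1 = w'.2.length + 1
      have : w.2.length + 1 = w.length := rfl
      rw [this, hlen]
      rfl
    cases w
    cases w'
    simp only [List.cons.injEq] at hlist
    simp [hlist.1, hlist.2]
  · exfalso
    apply hart
    push_neg at hd
    obtain ⟨m₀, hm₀⟩ := exists_ne (0 : M)
    set φ := LinearMap.toSpanSingleton Q M m₀ with hφ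
    have hker : ∀ q : Q, q • m₀ = 0 → q = 0 := by
      intro q hq
      apply hfaith'
      intro m
      rcases eq_or_ne m 0 with rfl | hm
      · simp
      · obtain ⟨d, hdm⟩ := hd m₀ m hm₀
        rw [← hdm]
        calc q • d m₀ = d (q • m₀) := (d.map_smul q m₀).symm
          _ = 0 := by rw [hq, map_zero]
    have hinj : Function.Injective φ := by
      rw [← LinearMap.ker_eq_bot, LinearMap.ker_eq_bot']
      intro q hq
      exact hker q hq
    haveI : IsArtinian Q M := by
      constructor
      constructor
      intro a
      have hbot : Acc (· < ·) (⊥ : Submodule Q M) :=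
        Acc.intro _ fun b hb => absurd hb (not_lt_bot)
      rcases eq_bot_or_eq_top a with rfl | rfl
      · exact hbot
      · refine Acc.intro _ fun b hb => ?_
        rcases eq_bot_or_eq_top b with rfl | rfl
        · exact hbot
        · exact absurd hb (lt_irrefl _)
    exact isArtinian_of_injective φ hinj

end Core

section Transfer

lemma lift_comp_coe {S T : Type*} [Semigroup S] [Semigroup T] (f : S →ₙ* T) (g : Bool → S) :
    ⇑(FreeSemigroup.lift (fun b : Bool => f (g b))) = ⇑f ∘ ⇑(FreeSemigroup.lift g) := by
  have h : FreeSemigroup.lift (fun b : Bool => f (g b)) =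
      f.comp (FreeSemigroup.lift g) := by
    apply FreeSemigroup.hom_ext
    funext b
    simp
  rw [h]
  rfl

end Transfer


/-- If `k` is a field not algebraic over a finite subfield and the `k`-algebra
`R` has a subquotient (a quotient of a `k`-subalgebra by a two-sided ideal)
which is left primitive and not left artinian, then `R` contains a free
noncyclic subsemigroup. -/
theorem free_subsemigroup_of_nonartinian_primitive_subquotient
    {k : Type v} [Field k] (hk : NotAlgebraicOverFiniteSubfield k)
    {R : Type u} [Ring R] [Algebra k R]
    (h : ∃ (A : Subalgebra k R) (I : TwoSidedIdeal A),
      IsLeftPrimitiveRing I.ringCon.Quotient ∧ ¬ IsArtinianRing I.ringCon.Quotient) :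
    HasFreeNoncyclicSubsemigroup R := by
  obtain ⟨A, I, hprim, hart⟩ := h
  obtain ⟨t, ht⟩ := exists_good_t hk
  let π : ↥A →+* I.ringCon.Quotient := RingCon.mk' I.ringCon
  have hπs : Function.Surjective ⇑π := fun q => Quotient.inductionOn' q fun a => ⟨a, rfl⟩
  let ψ : k →+* I.ringCon.Quotient := π.comp (algebraMap k ↥A)
  have hcen : ∀ (c : k) (q : I.ringCon.Quotient), ψ c * q = q * ψ c := by
    intro c q
    obtain ⟨a, rfl⟩ := hπs q
    show π (algebraMap k ↥A c) * π a = π a * π (algebraMap k ↥A c)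
    rw [← map_mul, ← map_mul, Algebra.commutes]
  have hfreeQ : HasFreeNoncyclicSubsemigroup I.ringCon.Quotient :=
    core_free ψ hcen ht (fun hpow => pow_t_inj ht hpow)
      (fun hl hv => valT_inj ht hl hv) hprim hart
  obtain ⟨xq, yq, hinjQ⟩ := hfreeQ
  obtain ⟨xa, hxa⟩ := hπs xq
  obtain ⟨ya, hya⟩ := hπs yq
  refine ⟨(xa : R), (ya : R), ?_⟩
  let πm : ↥A →ₙ* I.ringCon.Quotient := ⟨⇑π, fun a b => map_mul π a b⟩
  have hA : Function.Injective
      ⇑(FreeSemigroup.lift (fun b : Bool => if b then xa else ya)) := by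
    have hcomp := lift_comp_coe πm (fun b : Bool => if b then xa else ya)
    have heq : (fun b : Bool => πm (if b then xa else ya))
        = (fun b : Bool => if b then xq else yq) := by
      funext b
      cases b
      · show π ya = yq
        exact hya
      · show π xa = xq
        exact hxa
    rw [heq] at hcomp
    have hinj := hinjQ
    rw [hcomp] at hinj
    exact Function.Injective.of_comp hinj
  let ι : ↥A →ₙ* R := ⟨Subtype.val, fun a b => rfl⟩
  have hcomp2 := lift_comp_coe ι (fun b : Bool => if b then xa else ya)
  have heq2 : (fun b : Bool => ι (if b then xa else ya))
      = (fun b : Bool => if b then (xa : R) else (ya : R)) := by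
    funext b
    cases b <;> rfl
  rw [heq2] at hcomp2
  rw [hcomp2]
  exact Function.Injective.comp Subtype.val_injective hA
end

section
/- Let k be a field that is not algebraic over a finite subfield. The following two statements are equivalent: (i) every noncommutative division algebra over k contains a free noncyclic subsemigroup; (ii) every k-algebra that is noncommutative modulo its Jacobson radical contains a free noncyclic subsemigroup. -/
universe u v

/-- `r` lies in the Jacobson radical of the ring `R`: it annihilates every
simple left `R`-module. -/
def InJacobsonRadical {R : Type u} [Ring R] (r : R) : Prop :=
  ∀ (M : Type u) (_ : AddCommGroup M) (_ : Module R M),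
    IsSimpleModule R M → ∀ m : M, r • m = 0

namespace FreeAux

lemma int_digit_lemma (n : ℕ) (c : ℕ → ℤ) (hc : ∀ i, c i = -1 ∨ c i = 0 ∨ c i = 1)
    (h : (∑ i ∈ Finset.range n, c i * 2 ^ i) = 0) : ∀ i < n, c i = 0 := by
  induction n generalizing c with
  | zero => omega
  | succ m ih =>
    rw [Finset.sum_range_succ'] at h
    have key : ∀ i, c (i+1) * 2 ^ (i+1) = 2 * (c (i+1) * 2^i) := by intro i; ring
    simp only [key, ← Finset.mul_sum] at h
    have h2 : (2:ℤ) ∣ c 0 := ⟨-(∑ i ∈ Finset.range m, c (i+1) * 2 ^ i), by linarith [h]⟩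
    have hc0 : c 0 = 0 := by rcases hc 0 with h' | h' | h' <;> omega
    have hrest : (∑ i ∈ Finset.range m, c (i+1) * 2 ^ i) = 0 := by
      rw [hc0] at h
      simp only [pow_zero, mul_one, add_zero] at h
      linarith
    have := ih (fun i => c (i+1)) (fun i => hc (i+1)) hrest
    intro i hi
    cases i with
    | zero => exact hc0
    | succ j => exact this j (by omega)

lemma exists_good_scalar (k : Type v) [Field k] (hk : NotAlgebraicOverFiniteSubfield k) :
    ∃ t : k, (Function.Injective fun n : ℕ => t ^ n) ∧
      ∀ (n : ℕ) (c : ℕ → k), (∀ i, c i = -1 ∨ c i = 0 ∨ c i = 1) →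
        (∑ i ∈ Finset.range n, c i * t ^ i) = 0 → ∀ i < n, c i = 0 := by
  classical
  rcases CharP.char_is_prime_or_zero k (ringChar k) with hp | h0
  · -- positive characteristic: get transcendental element
    haveI : Fact (ringChar k).Prime := ⟨hp⟩
    haveI := ringChar.charP k
    set f := ZMod.castHom (dvd_refl (ringChar k)) k with hf
    set F : Subfield k := f.fieldRange with hF
    haveI : Finite F := Set.Finite.to_subtype (Set.finite_range f)
    have : ∃ x : k, ¬ IsAlgebraic F x := by
      by_contra h
      push_neg at h
      exact hk ⟨F, ‹Finite F›, h⟩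
    obtain ⟨t, ht⟩ := this
    refine ⟨t, ?_, ?_⟩
    · intro n m hnm
      have hnm' : t ^ n = t ^ m := hnm
      by_contra hne
      apply ht
      refine ⟨Polynomial.X ^ n - Polynomial.X ^ m, ?_, ?_⟩
      · intro h
        have := congrArg (fun p => Polynomial.coeff p n) h
        simp [Polynomial.coeff_X_pow, hne] at this
      · simp only [map_sub, map_pow, Polynomial.aeval_X]
        rw [sub_eq_zero]; exact hnm'
    · intro n c hc hsum
      by_contra hbad
      push_neg at hbad
      obtain ⟨i0, hi0n, hi0⟩ := hbad
      apply ht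
      have hmem : ∀ i, c i ∈ F := by
        intro i
        rcases hc i with h | h | h <;> rw [h]
        · exact neg_mem (one_mem F)
        · exact zero_mem F
        · exact one_mem F
      refine ⟨∑ i ∈ Finset.range n, Polynomial.monomial i (⟨c i, hmem i⟩ : F), ?_, ?_⟩
      · intro h
        have := congrArg (fun p => Polynomial.coeff p i0) h
        simp only [Polynomial.finset_sum_coeff, Polynomial.coeff_monomial,
          Polynomial.coeff_zero] at this
        rw [Finset.sum_ite_eq' (Finset.range n) i0] at this
        simp only [Finset.mem_range, hi0n, if_true] at this
        exact hi0 (by simpa [Subtype.ext_iff] using this)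
      · rw [map_sum, ← hsum]
        refine Finset.sum_congr rfl fun i _ => ?_
        rw [Polynomial.aeval_monomial]
        rfl
  · -- characteristic zero
    haveI := ringChar.charP k
    rw [h0] at this
    haveI : CharZero k := CharP.charP_to_charZero k
    refine ⟨2, ?_, ?_⟩
    · intro n m hnm
      have hnm' : (2:k) ^ n = (2:k) ^ m := hnm
      have h1 : ((2:ℕ):k) ^ n = ((2:ℕ):k) ^ m := by exact_mod_cast hnm'
      have h2 : ((2^n : ℕ):k) = ((2^m : ℕ):k) := by push_cast; exact h1
      exact Nat.pow_right_injective le_rfl (Nat.cast_injective h2)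
    · intro n c hc hsum
      set ε : ℕ → ℤ := fun i => if c i = 1 then 1 else if c i = -1 then -1 else 0 with hε
      have hm1 : (-1:k) ≠ 1 := by
        intro h'
        exact two_ne_zero (by linear_combination (-1 : k) * h' : (2:k) = 0)
      have h0m1 : (0:k) ≠ -1 := by
        intro h'
        exact one_ne_zero (by linear_combination h' : (1:k) = 0)
      have hcast : ∀ i, c i = (ε i : k) := by
        intro i
        rcases hc i with h | h | h <;> rw [hε] <;> simp [h, hm1, h0m1]
      have hεr : ∀ i, ε i = -1 ∨ ε i = 0 ∨ ε i = 1 := by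
        intro i; rw [hε]; dsimp only; split_ifs <;> simp
      have hzsum : (∑ i ∈ Finset.range n, ε i * 2 ^ i) = 0 := by
        have : ((∑ i ∈ Finset.range n, ε i * 2 ^ i : ℤ) : k) = 0 := by
          push_cast
          rw [← hsum]
          refine Finset.sum_congr rfl fun i _ => ?_
          rw [hcast i]
        exact_mod_cast this
      intro i hi
      rw [hcast i, int_digit_lemma n ε hεr hzsum i hi]
      simp

variable {k : Type v} [Field k]



/-- digit value of a boolean -/
def dg (k : Type v) [Field k] (b : Bool) : k := if b then 0 else 1

/-- the list of a word -/
def toL {α : Type*} (w : FreeSemigroup α) : List α := w.head :: w.tail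

lemma toL_of_mul {α : Type*} (b : α) (w : FreeSemigroup α) :
    toL (FreeSemigroup.of b * w) = b :: toL w := rfl

lemma toL_inj {α : Type*} : Function.Injective (toL (α := α)) := by
  intro w1 w2 h
  rcases w1 with ⟨h1, t1⟩; rcases w2 with ⟨h2, t2⟩
  simpa [toL, FreeSemigroup.ext_iff] using h

noncomputable def ψ (t : k) : FreeSemigroup Bool →ₙ* Matrix (Fin 2) (Fin 2) k :=
  FreeSemigroup.lift (fun b => !![t, dg k b; 0, 1])

lemma psi_entries (t : k) (w : FreeSemigroup Bool) :
    ψ t w 1 0 = 0 ∧ ψ t w 1 1 = 1 ∧ ψ t w 0 0 = t ^ (toL w).length ∧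
    ψ t w 0 1 = ∑ i ∈ Finset.range (toL w).length, dg k ((toL w).getD i true) * t ^ i := by
  induction w using FreeSemigroup.recOnMul with
  | ih1 b =>
    simp [ψ, toL, dg, FreeSemigroup.lift_of]
  | ih2 b w _ ihw =>
    obtain ⟨e10, e11, e00, e01⟩ := ihw
    have hmul : ψ t (FreeSemigroup.of b * w) = ψ t (FreeSemigroup.of b) * ψ t w := map_mul _ _ _
    have hof : ψ t (FreeSemigroup.of b) = !![t, dg k b; 0, 1] := rfl
    rw [toL_of_mul]
    refine ⟨?_, ?_, ?_, ?_⟩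
    · rw [hmul, hof]; simp [Matrix.mul_apply, Fin.sum_univ_two, e10, e11]
    · rw [hmul, hof]; simp [Matrix.mul_apply, Fin.sum_univ_two, e10, e11]
    · rw [hmul, hof]
      have hprod : (!![t, dg k b; 0, 1] * ψ t w) 0 0
          = t * ψ t w 0 0 + dg k b * ψ t w 1 0 := by
        simp [Matrix.mul_apply, Fin.sum_univ_two]
      rw [hprod, e00, e10, mul_zero, add_zero, List.length_cons, pow_succ]
      ring
    · rw [hmul, hof]
      have hprod : (!![t, dg k b; 0, 1] * ψ t w) 0 1
          = t * ψ t w 0 1 + dg k b * ψ t w 1 1 := by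
        simp [Matrix.mul_apply, Fin.sum_univ_two]
      rw [hprod, e01, e11, mul_one, List.length_cons, Finset.sum_range_succ']
      simp only [List.getD_cons_succ, List.getD_cons_zero, pow_zero, mul_one]
      congr 1
      rw [Finset.mul_sum]
      refine Finset.sum_congr rfl fun i _ => ?_
      ring

lemma psi_injective (t : k) (h1 : Function.Injective fun n : ℕ => t ^ n)
    (h2 : ∀ (n : ℕ) (c : ℕ → k), (∀ i, c i = -1 ∨ c i = 0 ∨ c i = 1) →
      (∑ i ∈ Finset.range n, c i * t ^ i) = 0 → ∀ i < n, c i = 0) :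
    Function.Injective (ψ t (k := k)) := by
  intro w1 w2 h
  obtain ⟨_, _, e00₁, e01₁⟩ := psi_entries t w1
  obtain ⟨_, _, e00₂, e01₂⟩ := psi_entries t w2
  set l1 := toL w1 with hl1
  set l2 := toL w2 with hl2
  have hlen : l1.length = l2.length := by
    have : t ^ l1.length = t ^ l2.length := by
      rw [← e00₁, ← e00₂, h]
    exact h1 this
  have hE : (∑ i ∈ Finset.range l1.length, dg k (l1.getD i true) * t ^ i)
      = ∑ i ∈ Finset.range l1.length, dg k (l2.getD i true) * t ^ i := by
    rw [← e01₁, hlen, ← e01₂, h]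
  have hsum : (∑ i ∈ Finset.range l1.length,
      (dg k (l1.getD i true) - dg k (l2.getD i true)) * t ^ i) = 0 := by
    simp only [sub_mul]
    rw [Finset.sum_sub_distrib, hE, sub_self]
  have hrange : ∀ i, (dg k (l1.getD i true) - dg k (l2.getD i true)) = -1 ∨
      (dg k (l1.getD i true) - dg k (l2.getD i true)) = 0 ∨
      (dg k (l1.getD i true) - dg k (l2.getD i true)) = 1 := by
    intro i
    cases l1.getD i true <;> cases l2.getD i true <;> simp [dg]
  have hz := h2 l1.length _ hrange hsum
  have hgets : ∀ i < l1.length, l1.getD i true = l2.getD i true := by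
    intro i hi
    have := sub_eq_zero.mp (hz i hi)
    cases h1' : l1.getD i true <;> cases h2' : l2.getD i true <;>
      rw [h1', h2'] at this <;> simp [dg] at this ⊢
  apply toL_inj
  rw [← hl1, ← hl2]
  apply List.ext_getElem hlen
  intro i hi1 hi2
  have := hgets i hi1
  rwa [List.getD_eq_getElem _ _ hi1, List.getD_eq_getElem _ _ hi2] at this

section Density
variable {R : Type u} [Ring R] {M : Type u} [AddCommGroup M] [Module R M]

/-- Two-vector Jacobson density for a simple module. -/
lemma density_two (hs : IsSimpleModule R M) (u v : M) (hu : u ≠ 0)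
    (hindep : ∀ d : M →ₗ[R] M, d u ≠ v) :
    ∀ w1 w2 : M, ∃ r : R, r • u = w1 ∧ r • v = w2 := by
  classical
  set N : Submodule R (M × M) := Submodule.span R {(u, v)} with hN
  have huvN : (u, v) ∈ N := Submodule.mem_span_singleton_self _
  have hp1 : Submodule.map (LinearMap.fst R M M) N = ⊤ := by
    rcases eq_bot_or_eq_top (Submodule.map (LinearMap.fst R M M) N) with h | h
    · exfalso
      have : u ∈ Submodule.map (LinearMap.fst R M M) N := ⟨(u, v), huvN, rfl⟩
      rw [h] at this
      exact hu (by simpa using this)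
    · exact h
  have hNtop : N = ⊤ := by
    set K : Submodule R M := Submodule.comap (LinearMap.inr R M M) N with hK
    rcases eq_bot_or_eq_top K with hKb | hKt
    · exfalso
      -- build d : M →ₗ[R] M with d u = v
      set φ : N →ₗ[R] M := (LinearMap.fst R M M).comp N.subtype with hφ
      have hinj : Function.Injective φ := by
        rw [← LinearMap.ker_eq_bot]
        rw [LinearMap.ker_eq_bot']
        rintro ⟨n, hn⟩ h0
        have hn1 : n.1 = 0 := h0
        have : n.2 ∈ K := by
          have : n = (0, n.2) := by
            ext
            · exact hn1
            · rfl
          rw [hK]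
          simpa [Submodule.mem_comap] using (this ▸ hn)
        rw [hKb] at this
        have hn2 : n.2 = 0 := this
        ext <;> simp [hn1, hn2]
      have hsurj : Function.Surjective φ := by
        rw [← LinearMap.range_eq_top, hφ, LinearMap.range_comp,
          Submodule.range_subtype]
        exact hp1
      set e := LinearEquiv.ofBijective φ ⟨hinj, hsurj⟩ with he
      set d : M →ₗ[R] M := (LinearMap.snd R M M).comp
        (N.subtype.comp (e.symm : M →ₗ[R] N)) with hd
      apply hindep d
      have h1 : e ⟨(u, v), huvN⟩ = u := rfl
      have h2 : e.symm u = ⟨(u, v), huvN⟩ := by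
        rw [LinearEquiv.symm_apply_eq]
        exact h1.symm
      show (LinearMap.snd R M M) (N.subtype (e.symm u)) = v
      rw [h2]
      rfl
    · -- K = ⊤, so N = ⊤
      rw [eq_top_iff]
      rintro ⟨a, b⟩ -
      obtain ⟨n, hn, hna⟩ : ∃ n ∈ N, (LinearMap.fst R M M) n = a := by
        have : a ∈ Submodule.map (LinearMap.fst R M M) N := by rw [hp1]; trivial
        simpa using this
      have h0b : ((0 : M), b - n.2) ∈ N := by
        have : b - n.2 ∈ K := by rw [hKt]; trivial
        exact this
      have : (a, b) = n + ((0 : M), b - n.2) := by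
        ext
        · simp [← hna]
        · simp
      rw [this]
      exact N.add_mem hn h0b
  intro w1 w2
  have : (w1, w2) ∈ N := by rw [hNtop]; trivial
  rw [hN, Submodule.mem_span_singleton] at this
  obtain ⟨r, hr⟩ := this
  refine ⟨r, ?_, ?_⟩
  · have := congrArg Prod.fst hr
    simpa using this
  · have := congrArg Prod.snd hr
    simpa using this
end Density

variable {k : Type v} [Field k] {R : Type u} [Ring R] [Algebra k R]
  {M : Type u} [AddCommGroup M] [Module R M]

lemma alg_smul_comm (s : k) (r : R) (m : M) :
    r • (algebraMap k R s • m) = algebraMap k R s • (r • m) := by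
  rw [← mul_smul, ← mul_smul, Algebra.commutes]

lemma alg_smul_cancel {s s' : k} {m : M} (hm : m ≠ 0)
    (h : algebraMap k R s • m = algebraMap k R s' • m) : s = s' := by
  by_contra hne
  apply hm
  have hsub : algebraMap k R (s - s') • m = 0 := by
    rw [map_sub, sub_smul, h, sub_self]
  have : algebraMap k R ((s - s')⁻¹ * (s - s')) • m = 0 := by
    rw [map_mul, mul_smul, hsub, smul_zero]
  rwa [inv_mul_cancel₀ (sub_ne_zero.mpr hne), map_one, one_smul] at this
  
lemma psi_of_entries (t : k) (b : Bool) :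
    ψ t (FreeSemigroup.of b) 0 0 = t ∧ ψ t (FreeSemigroup.of b) 0 1 = dg k b ∧
    ψ t (FreeSemigroup.of b) 1 0 = 0 ∧ ψ t (FreeSemigroup.of b) 1 1 = 1 := by
  have : ψ t (FreeSemigroup.of b) = !![t, dg k b; 0, 1] := rfl
  rw [this]
  refine ⟨?_, ?_, ?_, ?_⟩ <;> simp

lemma caseB_action (t : k) {u v : M} {ra rb : R}
    (hrau : ra • u = algebraMap k R t • u) (hrav : ra • v = v)
    (hrbu : rb • u = algebraMap k R t • u) (hrbv : rb • v = u + v)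
    (hpe : ∀ w : FreeSemigroup Bool, ψ t w 1 0 = 0 ∧ ψ t w 1 1 = 1)
    (w : FreeSemigroup Bool) :
    (FreeSemigroup.lift (fun b : Bool => if b then ra else rb) w) • u
      = algebraMap k R (ψ t w 0 0) • u ∧
    (FreeSemigroup.lift (fun b : Bool => if b then ra else rb) w) • v
      = algebraMap k R (ψ t w 0 1) • u + v := by
  set f : Bool → R := fun b => if b then ra else rb with hf
  have hfu : ∀ b, f b • u = algebraMap k R t • u := by
    intro b; cases b <;> simp [hf, hrau, hrbu]
  have hfv : ∀ b, f b • v = algebraMap k R (dg k b) • u + v := by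
    intro b; cases b <;> simp [hf, dg, hrav, hrbv]
  induction w using FreeSemigroup.recOnMul with
  | ih1 b =>
    obtain ⟨e00, e01, _, _⟩ := psi_of_entries t b
    rw [FreeSemigroup.lift_of, e00, e01]
    exact ⟨hfu b, hfv b⟩
  | ih2 b w _ ihw =>
    obtain ⟨ihu, ihv⟩ := ihw
    obtain ⟨w10, w11⟩ := hpe w
    obtain ⟨e00, e01, _, _⟩ := psi_of_entries t b
    have hmul : ψ t (FreeSemigroup.of b * w) = ψ t (FreeSemigroup.of b) * ψ t w :=
      map_mul _ _ _
    have h00 : ψ t (FreeSemigroup.of b * w) 0 0 = t * ψ t w 0 0 := by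
      rw [hmul]
      simp [Matrix.mul_apply, Fin.sum_univ_two, e00, e01, w10]
    have h01 : ψ t (FreeSemigroup.of b * w) 0 1 = t * ψ t w 0 1 + dg k b := by
      rw [hmul]
      simp [Matrix.mul_apply, Fin.sum_univ_two, e00, e01, w11]
    have hL : FreeSemigroup.lift f (FreeSemigroup.of b * w)
        = f b * FreeSemigroup.lift f w := by
      rw [map_mul, FreeSemigroup.lift_of]
    constructor
    · rw [hL, mul_smul, ihu, alg_smul_comm, hfu b, h00, ← mul_smul, ← map_mul,
        mul_comm (ψ t w 0 0) t]
    · rw [hL, mul_smul, ihv, smul_add, alg_smul_comm, hfu b, hfv b, h01]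
      rw [← mul_smul, ← map_mul, mul_comm (ψ t w 0 1) t, map_add, add_smul]
      abel

lemma caseA
    (hdiv : ∀ (D : Type u) (_ : DivisionRing D) (_ : Algebra k D),
        (¬ ∀ a b : D, a * b = b * a) → HasFreeNoncyclicSubsemigroup D)
    (hs : IsSimpleModule R M)
    (hdich : ∀ (u m : M), u ≠ 0 → ∃ d : M →ₗ[R] M, d u = m)
    (x y : R) (m0 : M) (hc : (x * y - y * x) • m0 ≠ 0) :
    HasFreeNoncyclicSubsemigroup R := by
  classical
  set ρ : R →+* AddMonoid.End M := Module.toAddMonoidEnd R M with hρ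
  have hρ_apply : ∀ (r : R) (m : M), ρ r m = r • m := fun r m => rfl
  set S : Subring (AddMonoid.End M) := ρ.range with hS
  have hm0 : ((x * y - y * x) • m0 : M) ≠ 0 := hc
  haveI : Nontrivial S := by
    refine ⟨1, 0, fun h => ?_⟩
    have h1 : (1 : AddMonoid.End M) = 0 := Subtype.ext_iff.mp h
    have := congrArg (fun f : AddMonoid.End M => f ((x * y - y * x) • m0)) h1
    exact hm0 (by simpa using this)
  -- every element of S is a unit or zero
  have hunit : ∀ s : S, IsUnit s ∨ s = 0 := by
    rintro ⟨s, r, rfl⟩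
    by_cases hz : ρ r = 0
    · right; exact Subtype.ext hz
    · left
      have key : ∀ w : M, w ≠ 0 → r • w ≠ 0 := by
        intro w hw hrw
        apply hz
        apply AddMonoidHom.ext
        intro m
        obtain ⟨d, hd⟩ := hdich w m hw
        show r • m = 0
        rw [← hd, ← d.map_smul r w, hrw, map_zero]
      have hu : ((x * y - y * x) • m0 : M) ≠ 0 := hm0
      set u : M := (x * y - y * x) • m0 with huu
      have hsu : r • u ≠ 0 := key u hu
      have hspan : Submodule.span R {r • u} = ⊤ := by
        rcases eq_bot_or_eq_top (Submodule.span R ({r • u} : Set M)) with h | h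
        · exfalso
          have hmem : r • u ∈ Submodule.span R ({r • u} : Set M) := Submodule.mem_span_singleton_self (r • u)
          rw [h, Submodule.mem_bot] at hmem
          exact hsu hmem
        · exact h
      obtain ⟨r', hr'⟩ : ∃ r' : R, r' • (r • u) = u := by
        have : u ∈ Submodule.span R ({r • u} : Set M) := by rw [hspan]; trivial
        rwa [Submodule.mem_span_singleton] at this
      have hleft : ρ r' * ρ r = 1 := by
        apply AddMonoidHom.ext
        intro m
        obtain ⟨d, hd⟩ := hdich u m hu
        show r' • (r • m) = m
        rw [← hd, ← d.map_smul r u, ← d.map_smul r' (r • u), hr']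
      have hright : ρ r * ρ r' = 1 := by
        apply AddMonoidHom.ext
        intro m
        obtain ⟨d, hd⟩ := hdich (r • u) m hsu
        show r • (r' • m) = m
        rw [← hd, ← d.map_smul r' (r • u), hr', ← d.map_smul r u]
      rw [isUnit_iff_exists]
      refine ⟨⟨ρ r', ⟨r', rfl⟩⟩, ?_, ?_⟩
      · exact Subtype.ext hright
      · exact Subtype.ext hleft
  letI divS : DivisionRing S := DivisionRing.ofIsUnitOrEqZero hunit
  letI algS : Algebra k S :=
    RingHom.toAlgebra' (ρ.rangeRestrict.comp (algebraMap k R)) (by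
      rintro c ⟨s, r, rfl⟩
      apply Subtype.ext
      show ρ (algebraMap k R c) * ρ r = ρ r * ρ (algebraMap k R c)
      rw [← map_mul, ← map_mul, Algebra.commutes])
  have hnc : ¬ ∀ a b : S, a * b = b * a := by
    intro hcomm
    have := hcomm ⟨ρ x, ⟨x, rfl⟩⟩ ⟨ρ y, ⟨y, rfl⟩⟩
    have hval : ρ x * ρ y = ρ y * ρ x := Subtype.ext_iff.mp this
    apply hm0
    have hz : ρ (x * y - y * x) = 0 := by
      rw [map_sub, map_mul, map_mul, hval, sub_self]
    rw [← hρ_apply, hz]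
    rfl
  obtain ⟨xs, ys, hinj⟩ := hdiv S divS algS hnc
  obtain ⟨rx, hrx⟩ := xs.2
  obtain ⟨ry, hry⟩ := ys.2
  refine ⟨rx, ry, ?_⟩
  intro w1 w2 h
  apply hinj
  apply Subtype.ext
  have hcomp : ∀ w : FreeSemigroup Bool,
      ((FreeSemigroup.lift (fun b : Bool => if b then xs else ys) w : S) : AddMonoid.End M)
        = FreeSemigroup.lift (fun b : Bool => if b then ρ rx else ρ ry) w := by
    intro w
    induction w using FreeSemigroup.recOnMul with
    | ih1 b =>
      rw [FreeSemigroup.lift_of, FreeSemigroup.lift_of]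
      cases b <;> simp [hrx, hry]
    | ih2 b w' _ ih =>
      simp only [map_mul, FreeSemigroup.lift_of, Subring.coe_mul, ih]
      cases b <;> simp [hrx, hry]
  rw [hcomp w1, hcomp w2]
  have hcomp2 : ∀ w : FreeSemigroup Bool,
      ρ (FreeSemigroup.lift (fun b : Bool => if b then rx else ry) w)
        = FreeSemigroup.lift (fun b : Bool => if b then ρ rx else ρ ry) w := by
    intro w
    induction w using FreeSemigroup.recOnMul with
    | ih1 b =>
      rw [FreeSemigroup.lift_of, FreeSemigroup.lift_of]
      cases b <;> simp
    | ih2 b w' _ ih =>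
      simp only [map_mul, FreeSemigroup.lift_of, ih]
      cases b <;> simp
  rw [← hcomp2 w1, ← hcomp2 w2, h]

lemma caseB {k : Type v} [Field k] {R : Type u} [Ring R] [Algebra k R]
    {M : Type u} [AddCommGroup M] [Module R M]
    (t : k) (h1 : Function.Injective fun n : ℕ => t ^ n)
    (h2 : ∀ (n : ℕ) (c : ℕ → k), (∀ i, c i = -1 ∨ c i = 0 ∨ c i = 1) →
      (∑ i ∈ Finset.range n, c i * t ^ i) = 0 → ∀ i < n, c i = 0)
    (hs : IsSimpleModule R M) (u v : M) (hu : u ≠ 0)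
    (hindep : ∀ d : M →ₗ[R] M, d u ≠ v) :
    HasFreeNoncyclicSubsemigroup R := by
  obtain ⟨ra, hrau, hrav⟩ := density_two hs u v hu hindep (algebraMap k R t • u) v
  obtain ⟨rb, hrbu, hrbv⟩ := density_two hs u v hu hindep (algebraMap k R t • u) (u + v)
  refine ⟨ra, rb, ?_⟩
  intro w1 w2 h
  have hpe : ∀ w : FreeSemigroup Bool, ψ t w 1 0 = 0 ∧ ψ t w 1 1 = 1 :=
    fun w => ⟨(psi_entries t w).1, (psi_entries t w).2.1⟩
  have A1 := caseB_action t hrau hrav hrbu hrbv hpe w1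
  have A2 := caseB_action t hrau hrav hrbu hrbv hpe w2
  have h00 : algebraMap k R (ψ t w1 0 0) • u = algebraMap k R (ψ t w2 0 0) • u := by
    rw [← A1.1, ← A2.1, h]
  have e00 : ψ t w1 0 0 = ψ t w2 0 0 := alg_smul_cancel hu h00
  have hv : algebraMap k R (ψ t w1 0 1) • u + v
      = algebraMap k R (ψ t w2 0 1) • u + v := by
    rw [← A1.2, ← A2.2, h]
  have e01 : ψ t w1 0 1 = ψ t w2 0 1 := alg_smul_cancel hu (add_right_cancel hv)
  have hmat : ψ t w1 = ψ t w2 := by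
    apply Matrix.ext
    intro i j
    fin_cases i <;> fin_cases j
    · exact e00
    · exact e01
    · exact ((hpe w1).1).trans ((hpe w2).1).symm
    · exact ((hpe w1).2).trans ((hpe w2).2).symm
  exact psi_injective t h1 h2 hmat

end FreeAux

/-- For a field `k` not algebraic over a finite subfield, the following are
equivalent: (i) every noncommutative division algebra over `k` contains a
free noncyclic subsemigroup; (ii) every `k`-algebra which is noncommutative
modulo its Jacobson radical contains a free noncyclic subsemigroup. -/
theorem free_subsemigroup_division_iff_noncomm_mod_jacobson
    {k : Type v} [Field k] (hk : NotAlgebraicOverFiniteSubfield k) :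
    (∀ (D : Type u) (_ : DivisionRing D) (_ : Algebra k D),
        (¬ ∀ a b : D, a * b = b * a) → HasFreeNoncyclicSubsemigroup D) ↔
    (∀ (R : Type u) (_ : Ring R) (_ : Algebra k R),
        (∃ x y : R, ¬ InJacobsonRadical (x * y - y * x)) →
          HasFreeNoncyclicSubsemigroup R) := by
  constructor
  · intro hdiv R _ _ hex
    obtain ⟨x, y, hxy⟩ := hex
    have hxy' : ∃ (M : Type u) (_ : AddCommGroup M) (_ : Module R M),
        ∃ (_ : IsSimpleModule R M), ∃ m : M, (x * y - y * x) • m ≠ 0 := by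
      by_contra hcon
      apply hxy
      intro M iAC iM hs m
      by_contra hne
      exact hcon ⟨M, iAC, iM, hs, m, hne⟩
    obtain ⟨M, iAC, iM, hsimp, m0, hm0⟩ := hxy'
    by_cases hdich : ∀ (u m : M), u ≠ 0 → ∃ d : M →ₗ[R] M, d u = m
    · exact FreeAux.caseA hdiv hsimp hdich x y m0 hm0
    · push_neg at hdich
      obtain ⟨u, v, hu, hindep⟩ := hdich
      obtain ⟨t, h1, h2⟩ := FreeAux.exists_good_scalar k hk
      exact FreeAux.caseB t h1 h2 hsimp u v hu hindep
  · intro hall D instD instA hnc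
    obtain ⟨a, ha⟩ := not_forall.mp hnc
    obtain ⟨b, hab⟩ := not_forall.mp ha
    refine hall D instD.toRing instA ⟨a, b, fun hJ => ?_⟩
    have := hJ D inferInstance inferInstance inferInstance 1
    rw [smul_eq_mul, mul_one, sub_eq_zero] at this
    exact hab this
end

section
/- Let k be a field that is not algebraic over a finite subfield and let n be an integer with n ≥ 2. Then the general linear group GL_n(k) contains a free noncyclic subgroup, i.e., a subgroup that is free on two generators. -/
/-- A group `G` contains a free noncyclic subgroup if there are `x y : G`
such that the subgroup they generate is free on `{x, y}`, i.e. the canonical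
group homomorphism from the free group on two generators sending the
generators to `x` and `y` is injective. -/
def HasFreeNoncyclicSubgroup (G : Type*) [Group G] : Prop :=
  ∃ x y : G, Function.Injective
    ⇑(FreeGroup.lift (fun b : Bool => if b then x else y))

open Matrix


theorem HasFreeNoncyclicSubgroup.of_injective {G H : Type*} [Group G] [Group H]
    (f : G →* H) (hf : Function.Injective f) (h : HasFreeNoncyclicSubgroup G) :
    HasFreeNoncyclicSubgroup H := by
  obtain ⟨x, y, hxy⟩ := h
  refine ⟨f x, f y, ?_⟩
  have : (FreeGroup.lift (fun b : Bool => if b then f x else f y)) =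
      f.comp (FreeGroup.lift (fun b : Bool => if b then x else y)) := by
    ext b
    cases b <;> simp
  rw [this]
  exact hf.comp hxy

def blockMonoidHom (l m : Type*) [DecidableEq l] [DecidableEq m] [Fintype l] [Fintype m]
    (R : Type*) [CommRing R] :
    Matrix l l R →* Matrix (l ⊕ m) (l ⊕ m) R where
  toFun A := Matrix.fromBlocks A 0 0 1
  map_one' := Matrix.fromBlocks_one
  map_mul' A B := by
    rw [Matrix.fromBlocks_multiply]
    simp

theorem blockMonoidHom_injective (l m : Type*) [DecidableEq l] [DecidableEq m] [Fintype l]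
    [Fintype m] (R : Type*) [CommRing R] : Function.Injective (blockMonoidHom l m R) := by
  intro A B h
  have := congrArg Matrix.toBlocks₁₁ h
  simpa [blockMonoidHom, Matrix.toBlocks_fromBlocks₁₁] using this

theorem gl2_to_gln {K k : Type*} [Field K] [Field k] (f : K →+* k) {n : ℕ} (hn : 2 ≤ n)
    (h : HasFreeNoncyclicSubgroup (GL (Fin 2) K)) :
    HasFreeNoncyclicSubgroup (GL (Fin n) k) := by
  have e : Fin 2 ⊕ Fin (n - 2) ≃ Fin n := (finSumFinEquiv).trans (finCongr (by omega))
  set ψ : Matrix (Fin 2) (Fin 2) K →* Matrix (Fin n) (Fin n) k :=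
    (((Matrix.reindexAlgEquiv k k e).toRingEquiv.toRingHom.toMonoidHom).comp
      (blockMonoidHom (Fin 2) (Fin (n-2)) k)).comp
      (RingHom.mapMatrix f).toMonoidHom with hψ
  have hmap : Function.Injective ((RingHom.mapMatrix f).toMonoidHom :
      Matrix (Fin 2) (Fin 2) K →* Matrix (Fin 2) (Fin 2) k) := by
    intro A B hAB
    exact Matrix.ext fun i j => f.injective (by
      have := congrFun (congrFun (congrArg (fun M : Matrix (Fin 2) (Fin 2) k => M) hAB) i) j
      simpa using this)
  have hψinj : Function.Injective ψ := by
    rw [hψ]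
    simp only [MonoidHom.coe_comp]
    exact ((Matrix.reindexAlgEquiv k k e).injective.comp
      (blockMonoidHom_injective _ _ _)).comp hmap
  exact h.of_injective (Units.map ψ) (Units.map_injective hψinj)


open Matrix Multiplicative Pointwise
open scoped WithZero

namespace GLPingPong

noncomputable section

variable {K : Type*} [Field K]

/-- discreteness: in ℤᵐ⁰, if ofAdd(-1) * y < x then y ≤ x -/
theorem zm0_le_of_lt {x y : ℤᵐ⁰}
    (h : (Multiplicative.ofAdd (-1 : ℤ) : Multiplicative ℤ) * y < x) : y ≤ x := by
  rcases eq_or_ne y 0 with rfl | hy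
  · exact zero_le'
  · rcases eq_or_ne x 0 with rfl | hx
    · exact absurd h (by simp)
    · obtain ⟨a, rfl⟩ := WithZero.ne_zero_iff_exists.mp hy
      obtain ⟨b, rfl⟩ := WithZero.ne_zero_iff_exists.mp hx
      rw [← WithZero.coe_mul, WithZero.coe_lt_coe] at h
      rw [WithZero.coe_le_coe]
      rw [← Multiplicative.toAdd_lt, toAdd_mul, toAdd_ofAdd] at h
      rw [← Multiplicative.toAdd_le]
      omega

variable (π : K)

def xu (hπ0 : π ≠ 0) : GL (Fin 2) K :=
  ⟨!![π^2, 0; 0, 1], !![(π^2)⁻¹, 0; 0, 1],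
    by ext i j; fin_cases i <;> fin_cases j <;> (simp [Matrix.mul_apply, Fin.sum_univ_two] <;> field_simp <;> try ring),
    by ext i j; fin_cases i <;> fin_cases j <;> (simp [Matrix.mul_apply, Fin.sum_univ_two] <;> field_simp <;> try ring)⟩

def cu (hπ0 : π ≠ 0) : GL (Fin 2) K :=
  ⟨!![1, 1; 1, 1 + π], !![(1+π)/π, -(1/π); -(1/π), 1/π],
    by ext i j; fin_cases i <;> fin_cases j <;> (simp [Matrix.mul_apply, Fin.sum_univ_two] <;> field_simp <;> try ring),
    by ext i j; fin_cases i <;> fin_cases j <;> (simp [Matrix.mul_apply, Fin.sum_univ_two] <;> field_simp <;> try ring)⟩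

def yu (hπ0 : π ≠ 0) : GL (Fin 2) K := cu π hπ0 * xu π hπ0 * (cu π hπ0)⁻¹

variable {K₀ : Type*} [Field K₀]

/-- nonzero vectors -/
abbrev V (K₀ : Type*) [Field K₀] := {s : Fin 2 → K₀ // s ≠ 0}

instance : MulAction (GL (Fin 2) K₀) (V K₀) where
  smul g s := ⟨(g : Matrix (Fin 2) (Fin 2) K₀).mulVec s.1, fun h0 => s.2 (by
    have h1 := congrArg (((g⁻¹ : GL (Fin 2) K₀) : Matrix (Fin 2) (Fin 2) K₀).mulVec) h0
    rwa [Matrix.mulVec_mulVec, ← Units.val_mul, inv_mul_cancel, Units.val_one,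
      Matrix.one_mulVec, Matrix.mulVec_zero] at h1)⟩
  one_smul s := Subtype.ext (by simp [HSMul.hSMul, SMul.smul, Matrix.one_mulVec])
  mul_smul g h s := Subtype.ext (by
    show ((g * h : GL (Fin 2) K₀) : Matrix (Fin 2) (Fin 2) K₀).mulVec s.1 =
      (g : Matrix (Fin 2) (Fin 2) K₀).mulVec ((h : Matrix (Fin 2) (Fin 2) K₀).mulVec s.1)
    rw [Units.val_mul, Matrix.mulVec_mulVec])

theorem smul_coe (g : GL (Fin 2) K₀) (s : V K₀) :
    (g • s).1 = (g : Matrix (Fin 2) (Fin 2) K₀).mulVec s.1 := rfl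

variable {π} (hπ0 : π ≠ 0)

theorem xu_smul (s : V K) : ((xu π hπ0 • s)).1 = ![π^2 * s.1 0, s.1 1] := by
  rw [smul_coe]
  funext i
  fin_cases i <;> simp [xu, Matrix.mulVec, dotProduct, Matrix.vecHead, Matrix.vecTail, Fin.sum_univ_two]

theorem xu_inv_smul (s : V K) : (((xu π hπ0)⁻¹ • s)).1 = ![(π^2)⁻¹ * s.1 0, s.1 1] := by
  rw [smul_coe]
  funext i
  fin_cases i <;> simp [xu, Matrix.mulVec, dotProduct, Matrix.vecHead, Matrix.vecTail, Fin.sum_univ_two]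

theorem cu_smul (s : V K) : ((cu π hπ0 • s)).1 = ![s.1 0 + s.1 1, s.1 0 + (1 + π) * s.1 1] := by
  rw [smul_coe]
  funext i
  fin_cases i <;> simp [cu, Matrix.mulVec, dotProduct, Matrix.vecHead, Matrix.vecTail, Fin.sum_univ_two] <;> ring

theorem cu_inv_smul (s : V K) :
    (((cu π hπ0)⁻¹ • s)).1 = ![((1+π) * s.1 0 - s.1 1)/π, (s.1 1 - s.1 0)/π] := by
  rw [smul_coe]
  funext i
  fin_cases i <;> simp [cu, Matrix.mulVec, dotProduct, Matrix.vecHead, Matrix.vecTail, Fin.sum_univ_two] <;> ring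

/-- the coordinates adapted to y -/
def Af (p : K₀) (t : Fin 2 → K₀) : K₀ := (1 + p) * t 0 - t 1
def Bf (t : Fin 2 → K₀) : K₀ := t 1 - t 0

theorem yu_smul_A (s : V K) : Af π ((yu π hπ0 • s)).1 = π^2 * Af π s.1 := by
  rw [yu, mul_smul, mul_smul, cu_smul, xu_smul, cu_inv_smul]
  simp only [Af, Matrix.cons_val_zero, Matrix.cons_val_one, Matrix.head_cons]
  field_simp
  ring

theorem yu_smul_B (s : V K) : Bf ((yu π hπ0 • s)).1 = Bf s.1 := by
  rw [yu, mul_smul, mul_smul, cu_smul, xu_smul, cu_inv_smul]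
  simp only [Bf, Matrix.cons_val_zero, Matrix.cons_val_one, Matrix.head_cons]
  field_simp
  ring

theorem yu_inv_eq : (yu π hπ0)⁻¹ = cu π hπ0 * (xu π hπ0)⁻¹ * (cu π hπ0)⁻¹ := by
  rw [yu]
  group

theorem yu_inv_smul_A (s : V K) : Af π (((yu π hπ0)⁻¹ • s)).1 = (π^2)⁻¹ * Af π s.1 := by
  rw [yu_inv_eq, mul_smul, mul_smul, cu_smul, xu_inv_smul, cu_inv_smul]
  simp only [Af, Matrix.cons_val_zero, Matrix.cons_val_one, Matrix.head_cons]
  field_simp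
  ring

theorem yu_inv_smul_B (s : V K) : Bf (((yu π hπ0)⁻¹ • s)).1 = Bf s.1 := by
  rw [yu_inv_eq, mul_smul, mul_smul, cu_smul, xu_inv_smul, cu_inv_smul]
  simp only [Bf, Matrix.cons_val_zero, Matrix.cons_val_one, Matrix.head_cons]
  field_simp
  ring

section Valued

variable (v : Valuation K ℤᵐ⁰)

theorem aux_lt {x : ℤᵐ⁰} (hx : x ≠ 0) {r : ℤᵐ⁰} (hr : r < 1) : r * x < x := by
  have := mul_lt_mul_of_pos_left hr (zero_lt_iff.mpr hx)
  rwa [mul_one, mul_comm] at this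

def XS (p : K) : Bool → Set (V K)
  | true => {s | v (s.1 0) ≤ v p * v (s.1 1)}
  | false => {s | v (Af p s.1) ≤ v p * v (Bf s.1)}

def YS (p : K) : Bool → Set (V K)
  | true => {s | v (s.1 1) ≤ v p * v (s.1 0)}
  | false => {s | v (Bf s.1) ≤ v p * v (Af p s.1)}

theorem hrne (hπ : v π = (Multiplicative.ofAdd (-1 : ℤ) : Multiplicative ℤ)) : v π ≠ 0 := by rw [hπ]; exact WithZero.coe_ne_zero

theorem hpine (hπ : v π = (Multiplicative.ofAdd (-1 : ℤ) : Multiplicative ℤ)) : π ≠ 0 := by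
  intro h
  have := hrne v (π := π) hπ
  rw [h, map_zero] at this
  exact this rfl

theorem hrlt (hπ : v π = (Multiplicative.ofAdd (-1 : ℤ) : Multiplicative ℤ)) : v π < 1 := by
  rw [hπ, ← WithZero.coe_one, WithZero.coe_lt_coe, ← Multiplicative.toAdd_lt]
  simp

theorem vb_one (hπ : v π = (Multiplicative.ofAdd (-1 : ℤ) : Multiplicative ℤ)) : v (1 + π) = 1 := v.map_one_add_of_lt (hrlt v hπ)

/-- vectors in the x-regions have Af, Bf of equal nonzero valuation -/
theorem mem_true_val (hπ : v π = (Multiplicative.ofAdd (-1 : ℤ) : Multiplicative ℤ)) {s : V K} (hs : s ∈ XS v π true ∪ YS v π true) :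
    v (Af π s.1) = v (Bf s.1) ∧ v (Bf s.1) ≠ 0 := by
  have hb := vb_one v hπ
  obtain hs | hs := hs
  · -- v u ≤ r * v w
    simp only [XS, Set.mem_setOf_eq] at hs
    have hw : v (s.1 1) ≠ 0 := by
      intro h
      rw [h, mul_zero, le_zero_iff, Valuation.zero_iff] at hs
      apply s.2
      funext i
      fin_cases i
      · exact hs
      · exact (Valuation.zero_iff v).mp h
    have hlt : v (s.1 0) < v (s.1 1) := lt_of_le_of_lt hs (aux_lt hw (hrlt v hπ))
    have h1 : v ((1 + π) * s.1 0) < v (s.1 1) := by rwa [v.map_mul, hb, one_mul]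
    constructor
    · rw [Af, Bf, v.map_sub_eq_of_lt_right h1, v.map_sub_eq_of_lt_left hlt]
    · rw [Bf, v.map_sub_eq_of_lt_left hlt]; exact hw
  · -- v w ≤ r * v u
    simp only [YS, Set.mem_setOf_eq] at hs
    have hu : v (s.1 0) ≠ 0 := by
      intro h
      rw [h, mul_zero, le_zero_iff, Valuation.zero_iff] at hs
      apply s.2
      funext i
      fin_cases i
      · exact (Valuation.zero_iff v).mp h
      · exact hs
    have hlt : v (s.1 1) < v (s.1 0) := lt_of_le_of_lt hs (aux_lt hu (hrlt v hπ))
    have h1 : v (s.1 1) < v ((1 + π) * s.1 0) := by rwa [v.map_mul, hb, one_mul]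
    constructor
    · rw [Af, Bf, v.map_sub_eq_of_lt_left h1, v.map_sub_eq_of_lt_right hlt, v.map_mul, hb, one_mul]
    · rw [Bf, v.map_sub_eq_of_lt_right hlt]; exact hu

/-- vectors in the y-regions have coordinates of equal nonzero valuation -/
theorem mem_false_val (hπ : v π = (Multiplicative.ofAdd (-1 : ℤ) : Multiplicative ℤ)) {s : V K} (hs : s ∈ XS v π false ∪ YS v π false) :
    v (s.1 0) = v (s.1 1) ∧ v (s.1 0) ≠ 0 := by
  have hb := vb_one v hπ
  have hp0 := hpine v hπ
  have e1 : π * s.1 0 = Af π s.1 + Bf s.1 := by rw [Af, Bf]; ring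
  have e2 : π * s.1 1 = Af π s.1 + (1 + π) * Bf s.1 := by rw [Af, Bf]; ring
  have hz : ¬ (Af π s.1 = 0 ∧ Bf s.1 = 0) := by
    rintro ⟨hA, hB⟩
    apply s.2
    have h0 : π * s.1 0 = 0 := by rw [e1, hA, hB, add_zero]
    have h1 : π * s.1 1 = 0 := by rw [e2, hA, hB, mul_zero, add_zero]
    funext i
    fin_cases i
    · exact (mul_eq_zero.mp h0).resolve_left hp0
    · exact (mul_eq_zero.mp h1).resolve_left hp0
  obtain hs | hs := hs
  · -- v Af ≤ r * v Bf
    simp only [XS, Set.mem_setOf_eq] at hs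
    have hB : v (Bf s.1) ≠ 0 := by
      intro h
      rw [h, mul_zero, le_zero_iff, Valuation.zero_iff] at hs
      exact hz ⟨hs, (Valuation.zero_iff v).mp h⟩
    have hlt : v (Af π s.1) < v (Bf s.1) := lt_of_le_of_lt hs (aux_lt hB (hrlt v hπ))
    have h1 : v (Af π s.1) < v ((1 + π) * Bf s.1) := by rwa [v.map_mul, hb, one_mul]
    have k1 : v (π * s.1 0) = v (Bf s.1) := by rw [e1, v.map_add_eq_of_lt_right hlt]
    have k2 : v (π * s.1 1) = v (Bf s.1) := by
      rw [e2, v.map_add_eq_of_lt_right h1, v.map_mul, hb, one_mul]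
    rw [v.map_mul] at k1 k2
    constructor
    · exact mul_left_cancel₀ (hrne v hπ) (k1.trans k2.symm)
    · intro h
      rw [h, mul_zero] at k1
      exact hB k1.symm
  · -- v Bf ≤ r * v Af
    simp only [YS, Set.mem_setOf_eq] at hs
    have hA : v (Af π s.1) ≠ 0 := by
      intro h
      rw [h, mul_zero, le_zero_iff, Valuation.zero_iff] at hs
      exact hz ⟨(Valuation.zero_iff v).mp h, hs⟩
    have hlt : v (Bf s.1) < v (Af π s.1) := lt_of_le_of_lt hs (aux_lt hA (hrlt v hπ))
    have h1 : v ((1 + π) * Bf s.1) < v (Af π s.1) := by rwa [v.map_mul, hb, one_mul]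
    have k1 : v (π * s.1 0) = v (Af π s.1) := by rw [e1, v.map_add_eq_of_lt_left hlt]
    have k2 : v (π * s.1 1) = v (Af π s.1) := by rw [e2, v.map_add_eq_of_lt_left h1]
    rw [v.map_mul] at k1 k2
    constructor
    · exact mul_left_cancel₀ (hrne v hπ) (k1.trans k2.symm)
    · intro h
      rw [h, mul_zero] at k1
      exact hA k1.symm

theorem ABnz (hp0 : π ≠ 0) (s : V K) : ¬ (Af π s.1 = 0 ∧ Bf s.1 = 0) := by
  rintro ⟨hA, hB⟩
  apply s.2
  have h0 : π * s.1 0 = 0 := by rw [show π * s.1 0 = Af π s.1 + Bf s.1 by rw [Af, Bf]; ring,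
    hA, hB, add_zero]
  have h1 : π * s.1 1 = 0 := by rw [show π * s.1 1 = Af π s.1 + (1 + π) * Bf s.1 by
    rw [Af, Bf]; ring, hA, hB, mul_zero, add_zero]
  funext i
  fin_cases i
  · exact (mul_eq_zero.mp h0).resolve_left hp0
  · exact (mul_eq_zero.mp h1).resolve_left hp0

theorem disj_main (hπ : v π = (Multiplicative.ofAdd (-1 : ℤ) : Multiplicative ℤ)) (s : V K)
    (h1 : s ∈ XS v π true ∪ YS v π true) (h2 : s ∈ XS v π false ∪ YS v π false) : False := by
  obtain ⟨hAB, hBne⟩ := mem_true_val v hπ h1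
  obtain h2 | h2 := h2
  · simp only [XS, Set.mem_setOf_eq] at h2
    rw [hAB] at h2
    exact absurd (lt_of_le_of_lt h2 (aux_lt hBne (hrlt v hπ))) (lt_irrefl _)
  · simp only [YS, Set.mem_setOf_eq] at h2
    rw [hAB] at h2
    exact absurd (lt_of_le_of_lt h2 (aux_lt hBne (hrlt v hπ))) (lt_irrefl _)

theorem disj_tt (hπ : v π = (Multiplicative.ofAdd (-1 : ℤ) : Multiplicative ℤ)) (s : V K)
    (h1 : s ∈ XS v π true) (h2 : s ∈ YS v π true) : False := by
  simp only [XS, YS, Set.mem_setOf_eq] at h1 h2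
  rcases eq_or_ne (v (s.1 0)) 0 with h0 | h0
  · rw [h0, mul_zero, le_zero_iff, Valuation.zero_iff] at h2
    rw [(Valuation.zero_iff v).mp h0] at h1
    apply s.2
    funext i
    fin_cases i
    · exact (Valuation.zero_iff v).mp h0
    · exact h2
  · have : v (s.1 0) < v (s.1 0) := by
      calc v (s.1 0) ≤ v π * v (s.1 1) := h1
        _ ≤ v π * (v π * v (s.1 0)) := mul_le_mul_right h2 _
        _ < v π * v (s.1 0) := by
            exact mul_lt_mul_of_pos_left (aux_lt h0 (hrlt v hπ)) (zero_lt_iff.mpr (hrne v hπ))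
        _ < v (s.1 0) := aux_lt h0 (hrlt v hπ)
    exact absurd this (lt_irrefl _)

theorem disj_ff (hπ : v π = (Multiplicative.ofAdd (-1 : ℤ) : Multiplicative ℤ)) (s : V K)
    (h1 : s ∈ XS v π false) (h2 : s ∈ YS v π false) : False := by
  simp only [XS, YS, Set.mem_setOf_eq] at h1 h2
  rcases eq_or_ne (v (Af π s.1)) 0 with h0 | h0
  · rw [h0, mul_zero, le_zero_iff, Valuation.zero_iff] at h2
    exact ABnz (hpine v hπ) s ⟨(Valuation.zero_iff v).mp h0, h2⟩
  · have : v (Af π s.1) < v (Af π s.1) := by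
      calc v (Af π s.1) ≤ v π * v (Bf s.1) := h1
        _ ≤ v π * (v π * v (Af π s.1)) := mul_le_mul_right h2 _
        _ < v π * v (Af π s.1) := by
            exact mul_lt_mul_of_pos_left (aux_lt h0 (hrlt v hπ)) (zero_lt_iff.mpr (hrne v hπ))
        _ < v (Af π s.1) := aux_lt h0 (hrlt v hπ)
    exact absurd this (lt_irrefl _)

open Pointwise in
set_option maxHeartbeats 2000000 in
theorem gl2_hasFree {K : Type} [Field K] (v : Valuation K ℤᵐ⁰) {π : K}
    (hπ : v π = (Multiplicative.ofAdd (-1 : ℤ) : Multiplicative ℤ)) :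
    HasFreeNoncyclicSubgroup (GL (Fin 2) K) := by
  have hp0 : π ≠ 0 := hpine v hπ
  have hr1 : v π < 1 := hrlt v hπ
  have hr0 : v π ≠ 0 := hrne v hπ
  refine ⟨xu π hp0, yu π hp0, ?_⟩
  refine FreeGroup.injective_lift_of_ping_pong (ι := Bool) (G := GL (Fin 2) K) (α := V K)
    (a := fun b : Bool => if b then xu π hp0 else yu π hp0)
    (X := XS v π) (Y := YS v π) ?_ ?_ ?_ ?_ ?_ ?_
  · -- nonempty
    intro i
    cases i
    · refine ⟨⟨![1, 1 + π], fun h => ?_⟩, ?_⟩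
      · have := congrFun h 0
        norm_num at this
      · have hA : Af π ![1, 1 + π] = 0 := by simp [Af]
        simp only [XS, Set.mem_setOf_eq, hA, map_zero]
        exact zero_le'
    · refine ⟨⟨![0, 1], fun h => ?_⟩, ?_⟩
      · have := congrFun h 1
        norm_num at this
      · simp only [XS, Set.mem_setOf_eq]
        norm_num
  · -- X pairwise disjoint
    intro i j hij
    refine Set.disjoint_left.mpr fun {s} hsi hsj => ?_
    cases i <;> cases j
    · exact absurd rfl hij
    · exact disj_main v hπ s (Or.inl hsj) (Or.inl hsi)
    · exact disj_main v hπ s (Or.inl hsi) (Or.inl hsj)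
    · exact absurd rfl hij
  · -- Y pairwise disjoint
    intro i j hij
    refine Set.disjoint_left.mpr fun {s} hsi hsj => ?_
    cases i <;> cases j
    · exact absurd rfl hij
    · exact disj_main v hπ s (Or.inr hsj) (Or.inr hsi)
    · exact disj_main v hπ s (Or.inr hsi) (Or.inr hsj)
    · exact absurd rfl hij
  · -- X i disjoint Y j
    intro i j
    refine Set.disjoint_left.mpr fun {s} hsi hsj => ?_
    cases i <;> cases j
    · exact disj_ff v hπ s hsi hsj
    · exact disj_main v hπ s (Or.inr hsj) (Or.inl hsi)
    · exact disj_main v hπ s (Or.inl hsi) (Or.inr hsj)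
    · exact disj_tt v hπ s hsi hsj
  · -- ping
    intro i t ht
    rw [Set.mem_smul_set] at ht
    obtain ⟨s, hs, rfl⟩ := ht
    rw [Set.mem_compl_iff] at hs
    cases i
    · -- y case
      simp only [YS, Set.mem_setOf_eq, not_le] at hs
      rw [hπ] at hs
      have hle : v (Af π s.1) ≤ v (Bf s.1) := zm0_le_of_lt hs
      simp only [if_neg Bool.false_ne_true, XS, Set.mem_setOf_eq]
      rw [yu_smul_A, yu_smul_B, v.map_mul, map_pow]
      calc v π ^ 2 * v (Af π s.1) = v π * (v π * v (Af π s.1)) := by rw [pow_two, mul_assoc]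
        _ ≤ v π * v (Bf s.1) := by
            refine mul_le_mul_right (le_trans ?_ hle) _
            calc v π * v (Af π s.1) ≤ 1 * v (Af π s.1) := mul_le_mul_left hr1.le _
              _ = v (Af π s.1) := one_mul _
    · -- x case
      simp only [YS, Set.mem_setOf_eq, not_le] at hs
      rw [hπ] at hs
      have hle : v (s.1 0) ≤ v (s.1 1) := zm0_le_of_lt hs
      simp only [if_true, XS, Set.mem_setOf_eq]
      rw [xu_smul]
      simp only [Matrix.cons_val_zero, Matrix.cons_val_one, Matrix.head_cons]
      rw [v.map_mul, map_pow]
      calc v π ^ 2 * v (s.1 0) = v π * (v π * v (s.1 0)) := by rw [pow_two, mul_assoc]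
        _ ≤ v π * v (s.1 1) := by
            refine mul_le_mul_right (le_trans ?_ hle) _
            calc v π * v (s.1 0) ≤ 1 * v (s.1 0) := mul_le_mul_left hr1.le _
              _ = v (s.1 0) := one_mul _
  · -- pong
    intro i t ht
    rw [Set.mem_smul_set] at ht
    obtain ⟨s, hs, rfl⟩ := ht
    rw [Set.mem_compl_iff] at hs
    have hinv : v π * ((v π ^ 2)⁻¹ * v (s.1 0)) = (v π)⁻¹ * v (s.1 0) := by
      rw [pow_two, mul_inv, ← mul_assoc, ← mul_assoc, mul_inv_cancel₀ hr0, one_mul]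
    have hone_le : (1 : ℤᵐ⁰) ≤ (v π)⁻¹ := (one_le_inv₀ (zero_lt_iff.mpr hr0)).mpr hr1.le
    cases i
    · -- y case
      simp only [XS, Set.mem_setOf_eq, not_le] at hs
      rw [hπ] at hs
      have hle : v (Bf s.1) ≤ v (Af π s.1) := zm0_le_of_lt hs
      simp only [Pi.inv_apply, if_neg Bool.false_ne_true, YS, Set.mem_setOf_eq]
      rw [yu_inv_smul_A, yu_inv_smul_B, v.map_mul, map_inv₀, map_pow]
      have hinv' : v π * ((v π ^ 2)⁻¹ * v (Af π s.1)) = (v π)⁻¹ * v (Af π s.1) := by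
        rw [pow_two, mul_inv, ← mul_assoc, ← mul_assoc, mul_inv_cancel₀ hr0, one_mul]
      rw [hinv']
      calc v (Bf s.1) ≤ v (Af π s.1) := hle
        _ = 1 * v (Af π s.1) := (one_mul _).symm
        _ ≤ (v π)⁻¹ * v (Af π s.1) := mul_le_mul_left hone_le _
    · -- x case
      simp only [XS, Set.mem_setOf_eq, not_le] at hs
      rw [hπ] at hs
      have hle : v (s.1 1) ≤ v (s.1 0) := zm0_le_of_lt hs
      simp only [Pi.inv_apply, if_true, YS, Set.mem_setOf_eq]
      rw [xu_inv_smul]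
      simp only [Matrix.cons_val_zero, Matrix.cons_val_one, Matrix.head_cons]
      rw [v.map_mul, map_inv₀, map_pow, hinv]
      calc v (s.1 1) ≤ v (s.1 0) := hle
        _ = 1 * v (s.1 0) := (one_mul _).symm
        _ ≤ (v π)⁻¹ * v (s.1 0) := mul_le_mul_left hone_le _

end Valued

end

end GLPingPong

open IsDedekindDomain

noncomputable section Instantiations

/-- the 2-adic valuation on ℚ -/
def twoSpectrum : HeightOneSpectrum ℤ where
  asIdeal := Ideal.span {2}
  isPrime := (Ideal.span_singleton_prime (by norm_num)).mpr Int.prime_two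
  ne_bot := by
    simp only [ne_eq, Ideal.span_singleton_eq_bot]
    norm_num

theorem rat_hasFree : HasFreeNoncyclicSubgroup (GL (Fin 2) ℚ) := by
  refine GLPingPong.gl2_hasFree (twoSpectrum.valuation (K := ℚ)) (π := (2 : ℚ)) ?_
  have h2 : (2 : ℚ) = algebraMap ℤ ℚ 2 := by norm_num
  rw [h2, HeightOneSpectrum.valuation_of_algebraMap]
  exact twoSpectrum.intValuation_singleton (by norm_num) rfl

/-- the X-adic valuation on 𝔽_p(X) -/
def xSpectrum (F : Type) [Field F] : HeightOneSpectrum (Polynomial F) where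
  asIdeal := Ideal.span {Polynomial.X}
  isPrime := (Ideal.span_singleton_prime Polynomial.X_ne_zero).mpr Polynomial.prime_X
  ne_bot := by
    simp only [ne_eq, Ideal.span_singleton_eq_bot]
    exact Polynomial.X_ne_zero

theorem ratfunc_hasFree (F : Type) [Field F] :
    HasFreeNoncyclicSubgroup (GL (Fin 2) (RatFunc F)) := by
  refine GLPingPong.gl2_hasFree ((xSpectrum F).valuation (K := RatFunc F))
    (π := RatFunc.X) ?_
  rw [← RatFunc.algebraMap_X, HeightOneSpectrum.valuation_of_algebraMap]
  exact (xSpectrum F).intValuation_singleton Polynomial.X_ne_zero rfl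

end Instantiations

/-- If `k` is a field not algebraic over a finite subfield and `n ≥ 2`, then
`GL_n(k)` contains a free noncyclic subgroup. -/
theorem gl_has_free_subgroup
    {k : Type*} [Field k] (hk : NotAlgebraicOverFiniteSubfield k)
    (n : ℕ) (hn : 2 ≤ n) :
    HasFreeNoncyclicSubgroup (GL (Fin n) k) := by
  obtain ⟨p, hchar⟩ := CharP.exists k
  rcases CharP.char_is_prime_or_zero k p with hp | rfl
  · -- positive characteristic
    haveI : Fact p.Prime := ⟨hp⟩
    set f₀ : ZMod p →+* k := ZMod.castHom dvd_rfl k with hf₀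
    have hex : ∃ t : k, Function.Injective (Polynomial.eval₂ f₀ t) := by
      by_contra hno
      push_neg at hno
      apply hk
      refine ⟨f₀.fieldRange, ?_, ?_⟩
      · have hfin : (f₀.fieldRange : Set k).Finite := by
          rw [RingHom.coe_fieldRange]
          exact Set.finite_range _
        exact hfin.to_subtype
      · intro x
        obtain ⟨q, hq0, hq⟩ : ∃ q : Polynomial (ZMod p), q ≠ 0 ∧ Polynomial.eval₂ f₀ x q = 0 := by
          by_contra hstrong
          push_neg at hstrong
          apply hno x
          have : Function.Injective (Polynomial.eval₂RingHom f₀ x) :=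
            (injective_iff_map_eq_zero' _).mpr fun a =>
              ⟨fun ha => by_contra fun h0 => hstrong a h0 ha, fun ha => by rw [ha, map_zero]⟩
          simpa using this
        refine ⟨q.map f₀.rangeRestrictField, Polynomial.map_ne_zero hq0, ?_⟩
        have hcomp : (algebraMap f₀.fieldRange k).comp f₀.rangeRestrictField = f₀ :=
          RingHom.ext fun a => rfl
        rw [Polynomial.aeval_def, Polynomial.eval₂_map, hcomp, hq]
    obtain ⟨t, ht⟩ := hex
    have hg : Function.Injective (Polynomial.eval₂RingHom f₀ t) := by simpa using ht
    exact gl2_to_gln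
      (IsFractionRing.lift (A := Polynomial (ZMod p)) (K := RatFunc (ZMod p)) hg) hn
      (ratfunc_hasFree (ZMod p))
  · -- characteristic zero
    haveI : CharZero k := CharP.charP_to_charZero k
    exact gl2_to_gln (Rat.castHom k) hn rat_hasFree
end

section
/- Let k be a field that is not algebraic over a finite subfield, and let R be a k-algebra that is left primitive and not left artinian. Then R contains a free noncyclic subsemigroup. -/
universe u v

/-! ### Auxiliary definitions -/

/-- "base-t" value of a list of binary digits. -/
def cword {k : Type v} [Field k] (t : k) : List Bool → k
  | [] => 0
  | s :: w => t * cword t w + (if s then 1 else 0)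

/-- natural number with the given binary digits -/
def natF : List Bool → ℕ
  | [] => 0
  | s :: w => 2 * natF w + (if s then 1 else 0)

/-- polynomial with the given binary digits as coefficients -/
noncomputable def polyW (A : Type*) [CommRing A] : List Bool → Polynomial A
  | [] => 0
  | s :: w => Polynomial.X * polyW A w + Polynomial.C (if s then 1 else 0)

lemma natF_inj : ∀ l l' : List Bool, l.length = l'.length → natF l = natF l' → l = l' := by
  intro l
  induction l with
  | nil =>
    intro l' hlen _
    cases l' with
    | nil => rfl
    | cons s w => simp at hlen
  | cons s w ih =>
    intro l' hlen heq
    cases l' with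
    | nil => simp at hlen
    | cons s' w' =>
      simp only [natF] at heq
      have hs : s = s' := by
        cases s <;> cases s' <;> simp_all <;> omega
      subst hs
      have hw : natF w = natF w' := by cases s <;> simp_all
      simp only [List.length_cons, Nat.add_right_cancel_iff] at hlen
      rw [ih w' hlen hw]

lemma cword_two_eq {k : Type v} [Field k] :
    ∀ l : List Bool, cword (2 : k) l = (natF l : k) := by
  intro l
  induction l with
  | nil => simp [cword, natF]
  | cons s w ih =>
    simp only [cword, natF, ih]
    cases s <;> push_cast <;> ring

lemma polyW_inj (A : Type*) [Field A] :
    ∀ l l' : List Bool, l.length = l'.length → polyW A l = polyW A l' → l = l' := by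
  intro l
  induction l with
  | nil =>
    intro l' hlen _
    cases l' with
    | nil => rfl
    | cons s w => simp at hlen
  | cons s w ih =>
    intro l' hlen heq
    cases l' with
    | nil => simp at hlen
    | cons s' w' =>
      simp only [polyW] at heq
      have hc0 := congrArg (fun p => Polynomial.coeff p 0) heq
      simp only [Polynomial.coeff_add, Polynomial.mul_coeff_zero, Polynomial.coeff_X_zero,
        zero_mul, zero_add, Polynomial.coeff_C_zero] at hc0
      have hs : s = s' := by
        cases s <;> cases s' <;> simp_all
      subst hs
      have hX : Polynomial.X * polyW A w = Polynomial.X * polyW A w' := by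
        have : Polynomial.C (if s then (1:A) else 0) = Polynomial.C (if s then (1:A) else 0) := rfl
        have := heq
        exact add_right_cancel this
      have hw : polyW A w = polyW A w' := mul_left_cancel₀ Polynomial.X_ne_zero hX
      simp only [List.length_cons, Nat.add_right_cancel_iff] at hlen
      rw [ih w' hlen hw]

lemma aeval_polyW {k : Type v} [Field k] (A : Type*) [CommRing A] [Algebra A k] (t : k) :
    ∀ l : List Bool, Polynomial.aeval t (polyW A l) = cword t l := by
  intro l
  induction l with
  | nil => simp [polyW, cword]
  | cons s w ih =>
    simp only [polyW, cword, map_add, map_mul, Polynomial.aeval_X, ih, Polynomial.aeval_C]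
    cases s <;> simp

/-- From the hypothesis on `k`, extract an element `t` whose powers are pairwise distinct
and whose "base-t" digit expansions (with digits 0, 1) are unique. -/
lemma exists_good_t_s8 {k : Type v} [Field k] (hk : NotAlgebraicOverFiniteSubfield k) :
    ∃ t : k, (∀ n m : ℕ, t ^ n = t ^ m → n = m) ∧
      ∀ l l' : List Bool, l.length = l'.length → cword t l = cword t l' → l = l' := by
  rcases CharP.char_is_prime_or_zero k (ringChar k) with hp | h0
  · -- positive characteristic
    haveI : NeZero (ringChar k) := ⟨hp.pos.ne'⟩
    haveI : Fact (ringChar k).Prime := ⟨hp⟩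
    let φ : ZMod (ringChar k) →+* k := ZMod.castHom dvd_rfl k
    let F : Subfield k := φ.fieldRange
    have hFfin : Finite F := by
      refine Finite.of_surjective (fun z : ZMod (ringChar k) =>
        (⟨φ z, RingHom.mem_fieldRange_self φ z⟩ : F)) ?_
      rintro ⟨x, hx⟩
      obtain ⟨z, hz⟩ := RingHom.mem_fieldRange.mp hx
      exact ⟨z, Subtype.ext hz⟩
    have hex : ∃ x : k, ¬ IsAlgebraic F x := by
      by_contra h
      push_neg at h
      exact hk ⟨F, hFfin, h⟩
    obtain ⟨t, ht⟩ := hex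
    refine ⟨t, ?_, ?_⟩
    · intro n m h
      by_contra hnm
      apply ht
      refine ⟨Polynomial.X ^ m - Polynomial.X ^ n, ?_, ?_⟩
      · intro hE
        rw [sub_eq_zero] at hE
        have hdeg := congrArg Polynomial.natDegree hE
        rw [Polynomial.natDegree_X_pow, Polynomial.natDegree_X_pow] at hdeg
        exact hnm hdeg.symm
      · simp [h, sub_eq_zero]
    · intro l l' hlen heq
      have hpoly : polyW F l = polyW F l' := by
        by_contra hne
        apply ht
        refine ⟨polyW F l - polyW F l', sub_ne_zero.mpr hne, ?_⟩
        simp [aeval_polyW, heq, sub_eq_zero]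
      exact polyW_inj F l l' hlen hpoly
  · -- characteristic zero
    haveI : CharP k 0 := h0 ▸ ringChar.charP k
    haveI : CharZero k := CharP.charP_to_charZero k
    refine ⟨2, ?_, ?_⟩
    · intro n m h
      have : ((2 ^ n : ℕ) : k) = ((2 ^ m : ℕ) : k) := by push_cast; exact h
      exact Nat.pow_right_injective le_rfl (Nat.cast_injective this)
    · intro l l' hlen heq
      rw [cword_two_eq, cword_two_eq] at heq
      exact natF_inj l l' hlen (Nat.cast_injective heq)

lemma main_aux {k : Type v} [Field k] (t : k)
    (htpow : ∀ n m : ℕ, t ^ n = t ^ m → n = m)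
    (htdig : ∀ l l' : List Bool, l.length = l'.length → cword t l = cword t l' → l = l')
    {R : Type u} [Ring R] [Algebra k R]
    (M : Type u) [AddCommGroup M] [Module R M] [IsSimpleModule R M] [FaithfulSMul R M]
    (hart : ¬ IsArtinianRing R) :
    HasFreeNoncyclicSubsemigroup R := by
  classical
  haveI ntM : Nontrivial M := IsSimpleModule.nontrivial R M
  -- transitivity of the action on nonzero vectors
  have hspan : ∀ m : M, m ≠ 0 → ∀ v : M, ∃ r : R, r • m = v := by
    intro m hm v
    have h1 : Submodule.span R {m} = ⊤ := by
      rcases eq_bot_or_eq_top (Submodule.span R ({m} : Set M)) with h | h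
      · exfalso
        apply hm
        have hmm := Submodule.mem_span_singleton_self (R := R) m
        rw [h] at hmm
        simpa using hmm
      · exact h
    have hv : v ∈ Submodule.span R ({m} : Set M) := by
      rw [h1]; exact Submodule.mem_top
    rwa [Submodule.mem_span_singleton] at hv
  have hfaith' : ∀ r : R, (∀ m : M, r • m = 0) → r = 0 := by
    intro r h
    refine FaithfulSMul.eq_of_smul_eq_smul (M := R) (α := M) ?_
    intro m; rw [h m, zero_smul]
  by_cases hex : ∃ e₀ e₁ : M, e₀ ≠ 0 ∧ e₁ ≠ 0 ∧
      (∀ f : Module.End R M, f e₀ ≠ e₁) ∧ (∀ f : Module.End R M, f e₁ ≠ e₀)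
  · -- main case: construct the free subsemigroup
    obtain ⟨e₀, e₁, he₀, he₁, h01, h10⟩ := hex
    -- from no `End` mapping u to v, get elements killing u and hitting anything at v
    have trans : ∀ u v : M, u ≠ 0 → (∀ f : Module.End R M, f u ≠ v) →
        ∀ m : M, ∃ s : R, s • u = 0 ∧ s • v = m := by
      intro u v hu hfv m
      -- first produce s with s • u = 0 and s • v ≠ 0
      have hwit : ∃ s : R, s • u = 0 ∧ s • v ≠ 0 := by
        by_contra h
        push_neg at h
        have key : ∀ a b : R, a • u = b • u → a • v = b • v := by
          intro a b hab
          have h0 : (a - b) • u = 0 := by rw [sub_smul, hab, sub_self]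
          have := h (a - b) h0
          rw [sub_smul, sub_eq_zero] at this
          exact this
        choose ρ hρ using hspan u hu
        let f : M →ₗ[R] M :=
          { toFun := fun w => ρ w • v
            map_add' := by
              intro w w'
              show ρ (w + w') • v = ρ w • v + ρ w' • v
              have h' : ρ (w + w') • u = (ρ w + ρ w') • u := by
                rw [add_smul, hρ, hρ, hρ]
              rw [key _ _ h', add_smul]
            map_smul' := by
              intro c w
              show ρ (c • w) • v = c • (ρ w • v)
              have h' : ρ (c • w) • u = (c * ρ w) • u := by
                rw [mul_smul, hρ, hρ]
              rw [key _ _ h', mul_smul] }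
        apply hfv f
        show ρ u • v = v
        have : ρ u • u = (1 : R) • u := by rw [hρ, one_smul]
        rw [key _ _ this, one_smul]
      obtain ⟨s₀, hs₀u, hs₀v⟩ := hwit
      -- the set of values s • v over s killing u is a nonzero submodule, hence all of M
      let T : Submodule R M :=
        { carrier := {m | ∃ s : R, s • u = 0 ∧ s • v = m}
          add_mem' := by
            rintro a b ⟨s, hs1, hs2⟩ ⟨s', h1, h2⟩
            exact ⟨s + s', by rw [add_smul, hs1, h1, add_zero], by rw [add_smul, hs2, h2]⟩
          zero_mem' := ⟨0, by rw [zero_smul], by rw [zero_smul]⟩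
          smul_mem' := by
            rintro c a ⟨s, h1, h2⟩
            exact ⟨c * s, by rw [mul_smul, h1, smul_zero], by rw [mul_smul, h2]⟩ }
      have hT : T = ⊤ := by
        rcases eq_bot_or_eq_top T with h | h
        · exfalso
          apply hs₀v
          have : (s₀ • v) ∈ T := ⟨s₀, hs₀u, rfl⟩
          rwa [h, Submodule.mem_bot] at this
        · exact h
      have : m ∈ T := by rw [hT]; exact Submodule.mem_top
      exact this
    -- get the two generators
    obtain ⟨p, hp1, hp0⟩ := trans e₁ e₀ he₁ h10 ((algebraMap k R t) • e₀)
    obtain ⟨q, hq0, hq1⟩ := trans e₀ e₁ he₀ h01 e₁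
    obtain ⟨q', hq'0, hq'1⟩ := trans e₀ e₁ he₀ h01 (e₀ + e₁)
    set x : R := p + q' with hxdef
    set y : R := p + q with hydef
    have hx0 : x • e₀ = (algebraMap k R t) • e₀ := by
      rw [hxdef, add_smul, hp0, hq'0, add_zero]
    have hy0 : y • e₀ = (algebraMap k R t) • e₀ := by
      rw [hydef, add_smul, hp0, hq0, add_zero]
    have hx1 : x • e₁ = e₀ + e₁ := by
      rw [hxdef, add_smul, hp1, hq'1, zero_add]
    have hy1 : y • e₁ = e₁ := by
      rw [hydef, add_smul, hp1, hq1, zero_add]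
    refine ⟨x, y, ?_⟩
    set f : Bool → R := fun b => if b then x else y with hfdef
    have hf0 : ∀ s : Bool, (f s) • e₀ = (algebraMap k R t) • e₀ := by
      intro s; cases s <;> simp [hfdef, hx0, hy0]
    have hf1 : ∀ s : Bool,
        (f s) • e₁ = (algebraMap k R (if s then (1:k) else 0)) • e₀ + e₁ := by
      intro s; cases s <;> simp [hfdef, hx1, hy1]
    set wr : List Bool → R := fun l => (l.map f).prod with hwrdef
    have hwr_cons : ∀ (s : Bool) (l : List Bool), wr (s :: l) = f s * wr l := by
      intro s l; simp [hwrdef]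
    -- commuting scalars through
    have hcomm : ∀ (c : k) (r : R) (m : M),
        r • ((algebraMap k R c) • m) = (algebraMap k R c) • (r • m) := by
      intro c r m
      rw [← mul_smul, ← Algebra.commutes c r, mul_smul]
    have hw0 : ∀ l : List Bool, (wr l) • e₀ = (algebraMap k R (t ^ l.length)) • e₀ := by
      intro l
      induction l with
      | nil => simp [hwrdef]
      | cons s l ih =>
        rw [hwr_cons, mul_smul, ih, hcomm, hf0, ← mul_smul, ← map_mul, List.length_cons,
          pow_succ]
    have hw1 : ∀ l : List Bool,
        (wr l) • e₁ = (algebraMap k R (cword t l)) • e₀ + e₁ := by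
      intro l
      induction l with
      | nil => simp [hwrdef, cword]
      | cons s l ih =>
        rw [hwr_cons, mul_smul, ih, smul_add, hcomm, hf0, hf1, ← mul_smul, ← map_mul]
        show _ + ((algebraMap k R (if s then (1:k) else 0)) • e₀ + e₁) = _
        rw [← add_assoc, ← add_smul, ← map_add]
        simp [cword, mul_comm]
    -- cancellation of scalars
    have hcanc : ∀ c : k, (algebraMap k R c) • e₀ = 0 → c = 0 := by
      intro c hc
      by_contra h0
      have hu : IsUnit (algebraMap k R c) :=
        IsUnit.map (algebraMap k R) (isUnit_iff_ne_zero.mpr h0)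
      obtain ⟨uu, huu⟩ := hu
      apply he₀
      calc e₀ = ((↑uu⁻¹ * ↑uu : R)) • e₀ := by rw [Units.inv_mul, one_smul]
        _ = (↑uu⁻¹ : R) • ((uu : R) • e₀) := by rw [mul_smul]
        _ = (↑uu⁻¹ : R) • (0 : M) := by rw [huu, hc]
        _ = 0 := smul_zero _
    have hcanc' : ∀ c c' : k, (algebraMap k R c) • e₀ = (algebraMap k R c') • e₀ → c = c' := by
      intro c c' hcc
      have : (algebraMap k R (c - c')) • e₀ = 0 := by
        rw [map_sub, sub_smul, hcc, sub_self]
      exact sub_eq_zero.mp (hcanc _ this)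
    -- the lift evaluates to the word product
    have hlift : ∀ u : FreeSemigroup Bool,
        (FreeSemigroup.lift f) u = wr (u.head :: u.tail) := by
      intro u
      induction u using FreeSemigroup.recOnMul with
      | ih1 a => simp [hwrdef]
      | ih2 a u _ ihu =>
        have hh : (FreeSemigroup.of a * u).head = a := rfl
        have ht' : (FreeSemigroup.of a * u).tail = u.head :: u.tail := rfl
        rw [map_mul, ihu, FreeSemigroup.lift_of, hh, ht', hwr_cons, hwr_cons, hwr_cons]
    -- conclude injectivity
    intro u v huv
    have h1 : wr (u.head :: u.tail) = wr (v.head :: v.tail) := by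
      rw [← hlift, ← hlift, huv]
    set Lu : List Bool := u.head :: u.tail with hLu
    set Lv : List Bool := v.head :: v.tail with hLv
    have hlen : Lu.length = Lv.length := by
      have h0 := congrArg (fun r : R => r • e₀) h1
      simp only [hw0] at h0
      exact htpow _ _ (hcanc' _ _ h0)
    have hLL : Lu = Lv := by
      have h2 := congrArg (fun r : R => r • e₁) h1
      simp only [hw1] at h2
      have h3 : (algebraMap k R (cword t Lu)) • e₀ = (algebraMap k R (cword t Lv)) • e₀ :=
        add_right_cancel h2
      exact htdig _ _ hlen (hcanc' _ _ h3)
    rw [hLu, hLv] at hLL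
    injection hLL with h1h h2h
    exact FreeSemigroup.ext h1h h2h
  · -- degenerate case: R is a division ring, hence artinian — contradiction
    exfalso
    push_neg at hex
    -- every vector is an End-image of any nonzero vector
    have claim : ∀ u : M, u ≠ 0 → ∀ v : M, ∃ g : Module.End R M, g u = v := by
      intro u hu v
      by_cases hv : v = 0
      · exact ⟨0, by simp [hv]⟩
      · by_cases hcase : ∃ g : Module.End R M, g u = v
        · exact hcase
        · have hng : ∀ g : Module.End R M, g u ≠ v := by
            push_neg at hcase; exact hcase
          obtain ⟨g, hg⟩ := hex u v hu hv hng
          have hg0 : g ≠ 0 := by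
              intro h
              apply hu
              rw [← hg, h]
              rfl
          have hinj : Function.Injective g := LinearMap.injective_of_ne_zero hg0
          have hsurj : Function.Surjective g := LinearMap.surjective_of_ne_zero hg0
          let e := LinearEquiv.ofBijective (g : M →ₗ[R] M) ⟨hinj, hsurj⟩
          refine ⟨(e.symm : M →ₗ[R] M), ?_⟩
          show e.symm u = v
          rw [← hg]
          have hge : g v = e v := rfl
          rw [hge, LinearEquiv.symm_apply_apply]
    -- every nonzero element of R has a left inverse
    have leftinv : ∀ r : R, r ≠ 0 → ∃ s : R, s * r = 1 := by
      intro r hr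
      have hm : ∃ m : M, r • m ≠ 0 := by
        by_contra h
        push_neg at h
        exact hr (hfaith' r h)
      obtain ⟨m, hm⟩ := hm
      have hm0 : m ≠ 0 := by
        intro h
        apply hm
        rw [h, smul_zero]
      obtain ⟨s, hs⟩ := hspan (r • m) hm m
      refine ⟨s, ?_⟩
      refine FaithfulSMul.eq_of_smul_eq_smul (M := R) (α := M) ?_
      intro w
      obtain ⟨g, hg⟩ := claim m hm0 w
      calc (s * r) • w = (s * r) • g m := by rw [hg]
        _ = g ((s * r) • m) := (LinearMap.map_smul (g : M →ₗ[R] M) (s * r) m).symm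
        _ = g (s • (r • m)) := by rw [mul_smul]
        _ = g m := by rw [hs]
        _ = w := hg
        _ = (1 : R) • w := (one_smul R w).symm
    -- hence every left ideal is ⊥ or ⊤, so R is artinian
    have ideals : ∀ I : Submodule R R, I = ⊥ ∨ I = ⊤ := by
      intro I
      by_cases hI : I = ⊥
      · exact Or.inl hI
      · right
        obtain ⟨r, hrI, hr0⟩ := Submodule.exists_mem_ne_zero_of_ne_bot hI
        obtain ⟨s, hs⟩ := leftinv r hr0
        have h1 : (1 : R) ∈ I := by
          have := I.smul_mem s hrI
          rwa [smul_eq_mul, hs] at this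
        refine Submodule.eq_top_iff'.mpr fun z => ?_
        have := I.smul_mem z h1
        rwa [smul_eq_mul, mul_one] at this
    apply hart
    constructor
    have acc_bot : Acc (· < ·) (⊥ : Submodule R R) :=
      Acc.intro _ fun J hJ => absurd hJ (not_lt_bot)
    constructor
    intro I
    rcases ideals I with h | h
    · exact h ▸ acc_bot
    · refine h ▸ Acc.intro _ fun J hJ => ?_
      rcases ideals J with h' | h'
      · exact h' ▸ acc_bot
      · exact absurd (h' ▸ hJ) (lt_irrefl ⊤)


/-- If `k` is a field not algebraic over a finite subfield and the `k`-algebra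
`R` is left primitive and not left artinian, then `R` contains a free
noncyclic subsemigroup. -/
theorem free_subsemigroup_of_nonartinian_primitive
    {k : Type v} [Field k] (hk : NotAlgebraicOverFiniteSubfield k)
    {R : Type u} [Ring R] [Algebra k R]
    (hprim : IsLeftPrimitiveRing R) (hart : ¬ IsArtinianRing R) :
    HasFreeNoncyclicSubsemigroup R := by
  obtain ⟨t, htpow, htdig⟩ := exists_good_t_s8 hk
  obtain ⟨M, iAG, iMod, hsimp, hfaith⟩ := hprim
  exact @main_aux k _ t htpow htdig R _ _ M iAG iMod hsimp hfaith hart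
end

section
/- Let k be a field that is not algebraic over a finite subfield, and let R be a simple left artinian k-algebra that is not a division ring. Then R contains a free noncyclic subgroup in its group of units; in particular R contains a free noncyclic subsemigroup. -/
namespace PPong

variable {K : Type*} [Field K]

/-- Hypotheses: `f` is an absolute value on `K` and `t` has absolute value 2. -/
structure Hyp (f : K → ℝ) (t : K) : Prop where
  nn : ∀ x, 0 ≤ f x
  mul : ∀ x y, f (x * y) = f x * f y
  addle : ∀ x y, f (x + y) ≤ f x + f y
  zero : ∀ x, f x = 0 ↔ x = 0
  ft : f t = 2

namespace Hyp

variable {f : K → ℝ} {t : K}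

theorem fone (H : Hyp f t) : f 1 = 1 := by
  have h := H.mul 1 1
  rw [one_mul] at h
  have h1 : f 1 ≠ 0 := fun h0 => one_ne_zero ((H.zero 1).mp h0)
  have := mul_left_cancel₀ h1 (h.symm.trans (mul_one (f 1)).symm)
  linarith [this]

theorem fpos (H : Hyp f t) {x : K} (hx : x ≠ 0) : 0 < f x :=
  lt_of_le_of_ne (H.nn x) (fun h => hx ((H.zero x).mp h.symm))

theorem fneg (H : Hyp f t) (x : K) : f (-x) = f x := by
  have hm : f (-1) = 1 := by
    have h := H.mul (-1) (-1)
    rw [neg_one_mul, neg_neg, H.fone] at h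
    have h2 : (f (-1) - 1) * (f (-1) + 1) = 0 := by nlinarith [h]
    rcases mul_eq_zero.mp h2 with h3 | h3
    · linarith
    · nlinarith [H.nn (-1)]
  calc f (-x) = f ((-1) * x) := by rw [neg_one_mul]
  _ = f (-1) * f x := H.mul _ _
  _ = f x := by rw [hm, one_mul]

theorem addge (H : Hyp f t) (x y : K) : f x - f y ≤ f (x + y) := by
  have h := H.addle (x + y) (-y)
  rw [add_neg_cancel_right, H.fneg] at h
  linarith

theorem addge' (H : Hyp f t) (x y : K) : f y - f x ≤ f (x + y) := by
  have h := H.addge y x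
  rwa [add_comm y x] at h

theorem ht0 (H : Hyp f t) : t ≠ 0 := fun h => by
  have := H.ft; rw [h, (H.zero 0).mpr rfl] at this; norm_num at this

theorem finv (H : Hyp f t) : f t⁻¹ = 1 / 2 := by
  have h := H.mul t t⁻¹
  rw [mul_inv_cancel₀ H.ht0, H.fone, H.ft] at h
  linarith

theorem fpow (H : Hyp f t) (n : ℕ) : f (t ^ n) = 2 ^ n := by
  induction n with
  | zero => simpa using H.fone
  | succ n ih => rw [pow_succ, H.mul, ih, H.ft, pow_succ]

theorem ftp1_le (H : Hyp f t) : f (t + 1) ≤ 3 := by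
  have := H.addle t 1; rw [H.ft, H.fone] at this; linarith

theorem ftp1_ge (H : Hyp f t) : 1 ≤ f (t + 1) := by
  have := H.addge t 1; rw [H.ft, H.fone] at this; linarith

theorem f1pti_le (H : Hyp f t) : f (1 + t⁻¹) ≤ 3 / 2 := by
  have := H.addle 1 t⁻¹; rw [H.finv, H.fone] at this; linarith

theorem f1pti_ge (H : Hyp f t) : 1 / 2 ≤ f (1 + t⁻¹) := by
  have := H.addge 1 t⁻¹; rw [H.finv, H.fone] at this; linarith

end Hyp

section Defs

variable (f : K → ℝ) (t : K)

def UA (v : Fin 2 → K) : Prop := 8 * f (v 1) ≤ f (v 0) ∧ v 0 ≠ 0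

def UA' (v : Fin 2 → K) : Prop := 8 * f (v 0) ≤ f (v 1) ∧ v 1 ≠ 0

def Mod (v : Fin 2 → K) : Prop :=
  f (v 0) ≤ 3 * f (v 1) ∧ f (v 1) ≤ 3 * f (v 0) ∧ v 0 ≠ 0

def gm : Matrix (Fin 2) (Fin 2) K := !![1, 1; 1, 1 + t⁻¹]

def gm' : Matrix (Fin 2) (Fin 2) K := !![t + 1, -t; -t, t]

def Am : Matrix (Fin 2) (Fin 2) K := !![t ^ 5, 0; 0, 1]

def Am' : Matrix (Fin 2) (Fin 2) K := !![(t ^ 5)⁻¹, 0; 0, 1]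

def UB (v : Fin 2 → K) : Prop := UA f ((gm' t).mulVec v)

def UB' (v : Fin 2 → K) : Prop := UA' f ((gm' t).mulVec v)

def pvec : Fin 2 → K := ![1, t ^ 2]

end Defs

section MulVec

variable (t : K) (v : Fin 2 → K)

theorem gm_mulVec : (gm t).mulVec v = ![v 0 + v 1, v 0 + (1 + t⁻¹) * v 1] := by
  funext i
  fin_cases i <;>
    simp [gm, Matrix.mulVec, dotProduct, Fin.sum_univ_two]

theorem gm'_mulVec : (gm' t).mulVec v = ![(t + 1) * v 0 + (-t) * v 1, (-t) * v 0 + t * v 1] := by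
  funext i
  fin_cases i <;>
    simp [gm', Matrix.mulVec, dotProduct, Fin.sum_univ_two]

theorem Am_mulVec : (Am t).mulVec v = ![t ^ 5 * v 0, v 1] := by
  funext i
  fin_cases i <;>
    simp [Am, Matrix.mulVec, dotProduct, Fin.sum_univ_two]

theorem Am'_mulVec : (Am' t).mulVec v = ![(t ^ 5)⁻¹ * v 0, v 1] := by
  funext i
  fin_cases i <;>
    simp [Am', Matrix.mulVec, dotProduct, Fin.sum_univ_two]

end MulVec

section MatrixIds

variable {t : K}

theorem gm_mul_gm' (ht : t ≠ 0) : gm t * gm' t = 1 := by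
  ext i j
  fin_cases i <;> fin_cases j <;>
    simp [gm, gm', Matrix.mul_apply, Fin.sum_univ_two, Matrix.one_apply] <;>
    field_simp <;> ring

theorem gm'_mul_gm (ht : t ≠ 0) : gm' t * gm t = 1 := by
  ext i j
  fin_cases i <;> fin_cases j <;>
    simp [gm, gm', Matrix.mul_apply, Fin.sum_univ_two, Matrix.one_apply] <;>
    field_simp <;> ring

theorem Am_mul_Am' (ht : t ≠ 0) : Am t * Am' t = 1 := by
  have h5 : t ^ 5 ≠ 0 := pow_ne_zero 5 ht
  ext i j
  fin_cases i <;> fin_cases j <;>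
    simp [Am, Am', Matrix.mul_apply, Fin.sum_univ_two, Matrix.one_apply] <;>
    field_simp

theorem Am'_mul_Am (ht : t ≠ 0) : Am' t * Am t = 1 := by
  have h5 : t ^ 5 ≠ 0 := pow_ne_zero 5 ht
  ext i j
  fin_cases i <;> fin_cases j <;>
    simp [Am, Am', Matrix.mul_apply, Fin.sum_univ_two, Matrix.one_apply] <;>
    field_simp

theorem cancel_g'g (ht : t ≠ 0) (v : Fin 2 → K) : (gm' t).mulVec ((gm t).mulVec v) = v := by
  rw [Matrix.mulVec_mulVec, gm'_mul_gm ht, Matrix.one_mulVec]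

theorem cancel_gg' (ht : t ≠ 0) (v : Fin 2 → K) : (gm t).mulVec ((gm' t).mulVec v) = v := by
  rw [Matrix.mulVec_mulVec, gm_mul_gm' ht, Matrix.one_mulVec]

end MatrixIds

end PPong

namespace PPong

variable {K : Type*} [Field K]

section Est

variable {f : K → ℝ} {t : K}

theorem modE1 (H : Hyp f t) (u : Fin 2 → K) (h : UA f u ∨ UA' f u) :
    Mod f ((gm t).mulVec u) := by
  rw [gm_mulVec]
  set a := f (u 0) with ha
  set b := f (u 1) with hb
  have hna : 0 ≤ a := H.nn _
  have hnb : 0 ≤ b := H.nn _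
  have h0le : f (u 0 + u 1) ≤ a + b := H.addle _ _
  have h0ge1 : a - b ≤ f (u 0 + u 1) := H.addge _ _
  have h0ge2 : b - a ≤ f (u 0 + u 1) := H.addge' _ _
  have hc : f ((1 + t⁻¹) * u 1) = f (1 + t⁻¹) * b := H.mul _ _
  have hcle : f ((1 + t⁻¹) * u 1) ≤ (3 / 2) * b := by
    rw [hc]; nlinarith [H.f1pti_le]
  have hcge : (1 / 2) * b ≤ f ((1 + t⁻¹) * u 1) := by
    rw [hc]; nlinarith [H.f1pti_ge]
  have h1le : f (u 0 + (1 + t⁻¹) * u 1) ≤ a + (3 / 2) * b := by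
    have := H.addle (u 0) ((1 + t⁻¹) * u 1); linarith
  have h1ge1 : a - (3 / 2) * b ≤ f (u 0 + (1 + t⁻¹) * u 1) := by
    have := H.addge (u 0) ((1 + t⁻¹) * u 1); linarith
  have h1ge2 : (1 / 2) * b - a ≤ f (u 0 + (1 + t⁻¹) * u 1) := by
    have := H.addge' (u 0) ((1 + t⁻¹) * u 1); linarith
  have hfst : ∀ x y : K, (![x, y] : Fin 2 → K) 0 = x := fun x y => rfl
  have hsnd : ∀ x y : K, (![x, y] : Fin 2 → K) 1 = y := fun x y => rfl
  rcases h with ⟨hh, hne⟩ | ⟨hh, hne⟩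
  · -- UA : 8 b ≤ a
    have hapos : 0 < a := H.fpos hne
    refine ⟨?_, ?_, ?_⟩
    · rw [hfst, hsnd]; linarith
    · rw [hfst, hsnd]; linarith
    · rw [hfst]
      intro hz
      rw [hz, (H.zero 0).mpr rfl] at h0ge1
      linarith
  · -- UA' : 8 a ≤ b
    have hbpos : 0 < b := H.fpos hne
    refine ⟨?_, ?_, ?_⟩
    · rw [hfst, hsnd]; linarith
    · rw [hfst, hsnd]; linarith
    · rw [hfst]
      intro hz
      rw [hz, (H.zero 0).mpr rfl] at h0ge2
      linarith

theorem modE2 (H : Hyp f t) (u : Fin 2 → K) (h : UA f u ∨ UA' f u) :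
    Mod f ((gm' t).mulVec u) := by
  rw [gm'_mulVec]
  set a := f (u 0) with ha
  set b := f (u 1) with hb
  have hna : 0 ≤ a := H.nn _
  have hnb : 0 ≤ b := H.nn _
  have htu0le : f ((t + 1) * u 0) ≤ 3 * a := by
    rw [H.mul]; nlinarith [H.ftp1_le]
  have htu0ge : a ≤ f ((t + 1) * u 0) := by
    rw [H.mul]; nlinarith [H.ftp1_ge]
  have hmt : ∀ x : K, f ((-t) * x) = 2 * f x := by
    intro x; rw [H.mul, H.fneg, H.ft]
  have htx : ∀ x : K, f (t * x) = 2 * f x := by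
    intro x; rw [H.mul, H.ft]
  have h0le : f ((t + 1) * u 0 + (-t) * u 1) ≤ 3 * a + 2 * b := by
    have := H.addle ((t + 1) * u 0) ((-t) * u 1); rw [hmt] at this; linarith
  have h0ge1 : a - 2 * b ≤ f ((t + 1) * u 0 + (-t) * u 1) := by
    have := H.addge ((t + 1) * u 0) ((-t) * u 1); rw [hmt] at this; linarith
  have h0ge2 : 2 * b - 3 * a ≤ f ((t + 1) * u 0 + (-t) * u 1) := by
    have := H.addge' ((t + 1) * u 0) ((-t) * u 1); rw [hmt] at this; linarith
  have h1le : f ((-t) * u 0 + t * u 1) ≤ 2 * a + 2 * b := by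
    have := H.addle ((-t) * u 0) (t * u 1); rw [hmt, htx] at this; linarith
  have h1ge1 : 2 * a - 2 * b ≤ f ((-t) * u 0 + t * u 1) := by
    have := H.addge ((-t) * u 0) (t * u 1); rw [hmt, htx] at this; linarith
  have h1ge2 : 2 * b - 2 * a ≤ f ((-t) * u 0 + t * u 1) := by
    have := H.addge' ((-t) * u 0) (t * u 1); rw [hmt, htx] at this; linarith
  have hfst : ∀ x y : K, (![x, y] : Fin 2 → K) 0 = x := fun x y => rfl
  have hsnd : ∀ x y : K, (![x, y] : Fin 2 → K) 1 = y := fun x y => rfl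
  rcases h with ⟨hh, hne⟩ | ⟨hh, hne⟩
  · have hapos : 0 < a := H.fpos hne
    refine ⟨?_, ?_, ?_⟩
    · rw [hfst, hsnd]; linarith
    · rw [hfst, hsnd]; linarith
    · rw [hfst]
      intro hz
      rw [hz, (H.zero 0).mpr rfl] at h0ge1
      linarith
  · have hbpos : 0 < b := H.fpos hne
    refine ⟨?_, ?_, ?_⟩
    · rw [hfst, hsnd]; linarith
    · rw [hfst, hsnd]; linarith
    · rw [hfst]
      intro hz
      rw [hz, (H.zero 0).mpr rfl] at h0ge2
      linarith

theorem stepA (H : Hyp f t) (v : Fin 2 → K) (h : Mod f v ∨ UA f v) :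
    UA f ((Am t).mulVec v) := by
  rw [Am_mulVec]
  have h5 : f (t ^ 5 * v 0) = 32 * f (v 0) := by
    rw [H.mul, H.fpow]; norm_num
  have hfst : ∀ x y : K, (![x, y] : Fin 2 → K) 0 = x := fun x y => rfl
  have hsnd : ∀ x y : K, (![x, y] : Fin 2 → K) 1 = y := fun x y => rfl
  have ht5 : t ^ 5 ≠ 0 := pow_ne_zero 5 H.ht0
  rcases h with ⟨h1, h2, hne⟩ | ⟨h1, hne⟩
  · constructor
    · rw [hfst, hsnd, h5]; nlinarith [H.nn (v 0)]
    · rw [hfst]; exact mul_ne_zero ht5 hne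
  · constructor
    · rw [hfst, hsnd, h5]; nlinarith [H.nn (v 0), H.nn (v 1)]
    · rw [hfst]; exact mul_ne_zero ht5 hne

theorem stepA' (H : Hyp f t) (v : Fin 2 → K) (h : Mod f v ∨ UA' f v) :
    UA' f ((Am' t).mulVec v) := by
  rw [Am'_mulVec]
  have ht5 : t ^ 5 ≠ 0 := pow_ne_zero 5 H.ht0
  have hi5 : f ((t ^ 5)⁻¹) = 1 / 32 := by
    have h := H.mul (t ^ 5) (t ^ 5)⁻¹
    rw [mul_inv_cancel₀ ht5, H.fone, H.fpow] at h
    norm_num at h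
    linarith
  have h5 : f ((t ^ 5)⁻¹ * v 0) = (1 / 32) * f (v 0) := by rw [H.mul, hi5]
  have hfst : ∀ x y : K, (![x, y] : Fin 2 → K) 0 = x := fun x y => rfl
  have hsnd : ∀ x y : K, (![x, y] : Fin 2 → K) 1 = y := fun x y => rfl
  rcases h with ⟨h1, h2, hne⟩ | ⟨h1, hne⟩
  · have hbpos : 0 < f (v 1) := by
      have := H.fpos hne
      nlinarith
    constructor
    · rw [hfst, hsnd, h5]; nlinarith [H.nn (v 0)]
    · rw [hsnd]
      intro hz
      rw [hz, (H.zero 0).mpr rfl] at hbpos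
      linarith
  · constructor
    · rw [hfst, hsnd, h5]; nlinarith [H.nn (v 0)]
    · rw [hsnd]; exact hne

end Est

end PPong

namespace PPong

variable {K : Type*} [Field K]

def mat (t : K) : Bool × Bool → Matrix (Fin 2) (Fin 2) K
  | (true, true) => Am t
  | (true, false) => Am' t
  | (false, true) => gm t * Am t * gm' t
  | (false, false) => gm t * Am' t * gm' t

def Pos (f : K → ℝ) (t : K) : Bool × Bool → (Fin 2 → K) → Prop
  | (true, true) => UA f
  | (true, false) => UA' f
  | (false, true) => UB f t
  | (false, false) => UB' f t

def Ok (x y : Bool × Bool) : Prop := ¬(x.1 = y.1 ∧ y.2 = !x.2)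

section Step

variable {f : K → ℝ} {t : K}

theorem bdecomp (ht : t ≠ 0) (M : Matrix (Fin 2) (Fin 2) K) (v : Fin 2 → K) :
    (gm' t).mulVec ((gm t * M * gm' t).mulVec v) = M.mulVec ((gm' t).mulVec v) := by
  have h : (gm t * M * gm' t).mulVec v = (gm t).mulVec (M.mulVec ((gm' t).mulVec v)) := by
    simp only [Matrix.mulVec_mulVec, Matrix.mul_assoc]
  rw [h, cancel_g'g ht]

theorem modOf_UB (H : Hyp f t) (v : Fin 2 → K) (h : UB f t v ∨ UB' f t v) : Mod f v := by
  have h2 : Mod f ((gm t).mulVec ((gm' t).mulVec v)) := by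
    apply modE1 H
    rcases h with h | h
    · exact Or.inl h
    · exact Or.inr h
  rwa [cancel_gg' H.ht0] at h2

theorem step (H : Hyp f t) (x y : Bool × Bool) (hxy : Ok x y) (v : Fin 2 → K)
    (hv : Pos f t y v) : Pos f t x ((mat t x).mulVec v) := by
  have ht := H.ht0
  obtain ⟨x1, x2⟩ := x
  obtain ⟨y1, y2⟩ := y
  cases x1 <;> cases x2 <;> cases y1 <;> cases y2 <;>
    simp only [mat, Pos, UB, UB'] at hv ⊢
  -- x = B⁻¹ = (false, false)
  · rw [bdecomp ht]; exact stepA' H _ (Or.inr hv)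
  · exact absurd ⟨rfl, rfl⟩ hxy
  · rw [bdecomp ht]; exact stepA' H _ (Or.inl (modE2 H v (Or.inr hv)))
  · rw [bdecomp ht]; exact stepA' H _ (Or.inl (modE2 H v (Or.inl hv)))
  -- x = B = (false, true)
  · exact absurd ⟨rfl, rfl⟩ hxy
  · rw [bdecomp ht]
    exact stepA H _ (Or.inr hv)
  · rw [bdecomp ht]; exact stepA H _ (Or.inl (modE2 H v (Or.inr hv)))
  · rw [bdecomp ht]; exact stepA H _ (Or.inl (modE2 H v (Or.inl hv)))
  -- x = A⁻¹ = (true, false)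
  · exact stepA' H _ (Or.inl (modOf_UB H v (Or.inr hv)))
  · exact stepA' H _ (Or.inl (modOf_UB H v (Or.inl hv)))
  · exact stepA' H _ (Or.inr hv)
  · exact absurd ⟨rfl, rfl⟩ hxy
  -- x = A = (true, true)
  · exact stepA H _ (Or.inl (modOf_UB H v (Or.inr hv)))
  · exact stepA H _ (Or.inl (modOf_UB H v (Or.inl hv)))
  · exact absurd ⟨rfl, rfl⟩ hxy
  · exact stepA H _ (Or.inr hv)

theorem pvec_c_bounds (H : Hyp f t) :
    (5 ≤ f ((t + 1) * pvec t 0 + (-t) * pvec t 1) ∧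
       f ((t + 1) * pvec t 0 + (-t) * pvec t 1) ≤ 11) ∧
      (6 ≤ f ((-t) * pvec t 0 + t * pvec t 1) ∧
        f ((-t) * pvec t 0 + t * pvec t 1) ≤ 10) := by
  have hp0 : pvec t 0 = 1 := rfl
  have hp1 : pvec t 1 = t ^ 2 := rfl
  rw [hp0, hp1]
  have h1 : f ((t + 1) * 1) ≤ 3 := by rw [mul_one]; exact H.ftp1_le
  have h1' : 1 ≤ f ((t + 1) * 1) := by rw [mul_one]; exact H.ftp1_ge
  have h2 : f ((-t) * t ^ 2) = 8 := by
    rw [H.mul, H.fneg, H.ft, H.fpow]; norm_num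
  have h3 : f ((-t) * 1) = 2 := by rw [mul_one, H.fneg, H.ft]
  have h4 : f (t * t ^ 2) = 8 := by rw [H.mul, H.ft, H.fpow]; norm_num
  refine ⟨⟨?_, ?_⟩, ?_, ?_⟩
  · have := H.addge' ((t + 1) * 1) ((-t) * t ^ 2); rw [h2] at this; linarith
  · have := H.addle ((t + 1) * 1) ((-t) * t ^ 2); rw [h2] at this; linarith
  · have := H.addge' ((-t) * 1) (t * t ^ 2); rw [h3, h4] at this; linarith
  · have := H.addle ((-t) * 1) (t * t ^ 2); rw [h3, h4] at this; linarith

theorem fp0 (H : Hyp f t) : f (pvec t 0) = 1 := H.fone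

theorem fp1 (H : Hyp f t) : f (pvec t 1) = 4 := by
  have : f (t ^ 2) = 4 := by rw [H.fpow]; norm_num
  exact this

theorem ne_zero_of_f_pos (H : Hyp f t) {x : K} (h : 0 < f x) : x ≠ 0 := fun h0 => by
  rw [h0, (H.zero 0).mpr rfl] at h; linarith

theorem notPos (H : Hyp f t) (x : Bool × Bool) : ¬ Pos f t x (pvec t) := by
  obtain ⟨⟨hc0l, hc0u⟩, hc1l, hc1u⟩ := pvec_c_bounds H
  obtain ⟨x1, x2⟩ := x
  cases x1 <;> cases x2 <;> simp only [Pos, UB, UB']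
  · -- B⁻¹
    intro hpos
    obtain ⟨h1, _⟩ := hpos
    rw [gm'_mulVec] at h1
    have e0 : (![(t + 1) * pvec t 0 + (-t) * pvec t 1,
        (-t) * pvec t 0 + t * pvec t 1] : Fin 2 → K) 0 =
        (t + 1) * pvec t 0 + (-t) * pvec t 1 := rfl
    have e1 : (![(t + 1) * pvec t 0 + (-t) * pvec t 1,
        (-t) * pvec t 0 + t * pvec t 1] : Fin 2 → K) 1 =
        (-t) * pvec t 0 + t * pvec t 1 := rfl
    rw [e0, e1] at h1
    linarith
  · -- B
    intro hpos
    obtain ⟨h1, _⟩ := hpos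
    rw [gm'_mulVec] at h1
    have e0 : (![(t + 1) * pvec t 0 + (-t) * pvec t 1,
        (-t) * pvec t 0 + t * pvec t 1] : Fin 2 → K) 0 =
        (t + 1) * pvec t 0 + (-t) * pvec t 1 := rfl
    have e1 : (![(t + 1) * pvec t 0 + (-t) * pvec t 1,
        (-t) * pvec t 0 + t * pvec t 1] : Fin 2 → K) 1 =
        (-t) * pvec t 0 + t * pvec t 1 := rfl
    rw [e0, e1] at h1
    linarith
  · -- A⁻¹
    intro hpos
    obtain ⟨h1, _⟩ := hpos
    rw [fp0 H, fp1 H] at h1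
    linarith
  · -- A
    intro hpos
    obtain ⟨h1, _⟩ := hpos
    rw [fp0 H, fp1 H] at h1
    linarith

theorem base (H : Hyp f t) (x : Bool × Bool) : Pos f t x ((mat t x).mulVec (pvec t)) := by
  have ht := H.ht0
  have ht5 : t ^ 5 ≠ 0 := pow_ne_zero 5 ht
  obtain ⟨⟨hc0l, hc0u⟩, hc1l, hc1u⟩ := pvec_c_bounds H
  have hf5 : ∀ x : K, f (t ^ 5 * x) = 32 * f x := by
    intro x; rw [H.mul, H.fpow]; norm_num
  have hfi5 : ∀ x : K, f ((t ^ 5)⁻¹ * x) = (1 / 32) * f x := by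
    intro x
    have h := H.mul (t ^ 5) (t ^ 5)⁻¹
    rw [mul_inv_cancel₀ ht5, H.fone, H.fpow] at h
    have h2 : f ((t ^ 5)⁻¹) = 1 / 32 := by norm_num at h; linarith
    rw [H.mul, h2]
  obtain ⟨x1, x2⟩ := x
  cases x1 <;> cases x2 <;> simp only [mat, Pos, UB, UB']
  · -- B⁻¹
    rw [bdecomp ht, gm'_mulVec, Am'_mulVec]
    constructor
    · show 8 * f ((t ^ 5)⁻¹ * ((t + 1) * pvec t 0 + (-t) * pvec t 1)) ≤
        f ((-t) * pvec t 0 + t * pvec t 1)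
      rw [hfi5]
      linarith
    · show (-t) * pvec t 0 + t * pvec t 1 ≠ 0
      exact ne_zero_of_f_pos H (by linarith)
  · -- B
    rw [bdecomp ht, gm'_mulVec, Am_mulVec]
    constructor
    · show 8 * f ((-t) * pvec t 0 + t * pvec t 1) ≤
        f (t ^ 5 * ((t + 1) * pvec t 0 + (-t) * pvec t 1))
      rw [hf5]
      linarith
    · show t ^ 5 * ((t + 1) * pvec t 0 + (-t) * pvec t 1) ≠ 0
      exact mul_ne_zero ht5 (ne_zero_of_f_pos H (by linarith))
  · -- A⁻¹
    rw [Am'_mulVec]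
    constructor
    · show 8 * f ((t ^ 5)⁻¹ * pvec t 0) ≤ f (pvec t 1)
      rw [hfi5, fp0 H, fp1 H]
      norm_num
    · show pvec t 1 ≠ 0
      exact pow_ne_zero 2 ht
  · -- A
    rw [Am_mulVec]
    constructor
    · show 8 * f (pvec t 1) ≤ f (t ^ 5 * pvec t 0)
      rw [hf5, fp0 H, fp1 H]
      norm_num
    · show t ^ 5 * pvec t 0 ≠ 0
      exact mul_ne_zero ht5 one_ne_zero

theorem chain_step (H : Hyp f t) : ∀ (l : List (Bool × Bool)) (x : Bool × Bool),
    List.Chain' Ok (x :: l) → Pos f t x (((x :: l).map (mat t)).prod.mulVec (pvec t)) := by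
  intro l
  induction l with
  | nil =>
    intro x _
    have h : ((([x]).map (mat t)).prod : Matrix (Fin 2) (Fin 2) K) = mat t x := by simp
    rw [h]
    exact base H x
  | cons y l ih =>
    intro x hc
    rw [List.Chain', List.isChain_cons_cons] at hc
    have h1 := ih y hc.2
    have h2 : ((x :: y :: l).map (mat t)).prod = mat t x * ((y :: l).map (mat t)).prod := by
      simp
    rw [h2, ← Matrix.mulVec_mulVec]
    exact step H x y hc.1 _ h1

end Step

theorem not_chain'_split {α : Type*} (R : α → α → Prop) :
    ∀ l : List α, ¬ l.Chain' R → ∃ l₁ a b l₂, l = l₁ ++ a :: b :: l₂ ∧ ¬ R a b := by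
  intro l
  induction l with
  | nil => intro h; exact absurd List.isChain_nil h
  | cons a l ih =>
    intro h
    cases l with
    | nil => exact absurd (List.isChain_singleton a) h
    | cons b l' =>
      by_cases hab : R a b
      · have h2 : ¬ (b :: l').Chain' R := fun hc => h (List.isChain_cons_cons.mpr ⟨hab, hc⟩)
        obtain ⟨l₁, c, d, l₂, heq, hcd⟩ := ih h2
        exact ⟨a :: l₁, c, d, l₂, by rw [heq, List.cons_append], hcd⟩
      · exact ⟨[], a, b, l', rfl, hab⟩

theorem chain_ok (w : FreeGroup Bool) : List.Chain' Ok w.toWord := by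
  by_contra h
  obtain ⟨l₁, a, b, l₂, heq, hab⟩ := not_chain'_split Ok _ h
  obtain ⟨h1, h2⟩ := not_not.mp hab
  obtain ⟨a1, a2⟩ := a
  obtain ⟨b1, b2⟩ := b
  simp only at h1 h2
  subst h1
  subst h2
  exact FreeGroup.reduce.not ((FreeGroup.reduce_toWord w).trans heq)

end PPong

namespace PPong

variable {K : Type*} [Field K] {f : K → ℝ} {t : K}

theorem BmBm' (ht : t ≠ 0) :
    (gm t * Am t * gm' t) * (gm t * Am' t * gm' t) = 1 := by
  simp only [mul_assoc]
  rw [← mul_assoc (gm' t) (gm t), gm'_mul_gm ht, one_mul,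
    ← mul_assoc (Am t) (Am' t), Am_mul_Am' ht, one_mul, gm_mul_gm' ht]

theorem Bm'Bm (ht : t ≠ 0) :
    (gm t * Am' t * gm' t) * (gm t * Am t * gm' t) = 1 := by
  simp only [mul_assoc]
  rw [← mul_assoc (gm' t) (gm t), gm'_mul_gm ht, one_mul,
    ← mul_assoc (Am' t) (Am t), Am'_mul_Am ht, one_mul, gm_mul_gm' ht]

/-- The two units. -/
def AU (ht : t ≠ 0) : (Matrix (Fin 2) (Fin 2) K)ˣ :=
  ⟨Am t, Am' t, Am_mul_Am' ht, Am'_mul_Am ht⟩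

def BU (ht : t ≠ 0) : (Matrix (Fin 2) (Fin 2) K)ˣ :=
  ⟨gm t * Am t * gm' t, gm t * Am' t * gm' t, BmBm' ht, Bm'Bm ht⟩

theorem mat_eq (ht : t ≠ 0) (x : Bool × Bool) :
    ((cond x.2 ((if x.1 then AU ht else BU ht)) ((if x.1 then AU ht else BU ht))⁻¹ :
      (Matrix (Fin 2) (Fin 2) K)ˣ) : Matrix (Fin 2) (Fin 2) K) = mat t x := by
  obtain ⟨x1, x2⟩ := x
  cases x1 <;> cases x2 <;> rfl

theorem freeness (H : Hyp f t) :
    Function.Injective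
      ⇑(FreeGroup.lift (fun b : Bool => if b then AU H.ht0 else BU H.ht0)) := by
  set F : Bool → (Matrix (Fin 2) (Fin 2) K)ˣ :=
    fun b => if b then AU H.ht0 else BU H.ht0 with hF
  rw [injective_iff_map_eq_one]
  intro w hw
  by_contra hne
  have hl : w.toWord ≠ [] := fun h => hne (FreeGroup.toWord_eq_nil_iff.mp h)
  obtain ⟨x, l', hxl⟩ := List.exists_cons_of_ne_nil hl
  -- the product of the matrices equals 1
  have h1 : FreeGroup.lift F w =
      (List.map (fun x => cond x.2 (F x.1) (F x.1)⁻¹) w.toWord).prod := by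
    conv_lhs => rw [← FreeGroup.mk_toWord (x := w)]
    exact FreeGroup.lift_mk
  have h2 : ((List.map (fun x => cond x.2 (F x.1) (F x.1)⁻¹) w.toWord).prod :
      Matrix (Fin 2) (Fin 2) K) = 1 := by
    rw [← h1, hw, Units.val_one]
  have h3 : ((List.map (fun x => cond x.2 (F x.1) (F x.1)⁻¹) w.toWord).prod :
      Matrix (Fin 2) (Fin 2) K) = (w.toWord.map (mat t)).prod := by
    calc ((List.map (fun x => cond x.2 (F x.1) (F x.1)⁻¹) w.toWord).prod :
        Matrix (Fin 2) (Fin 2) K)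
        = ((List.map (fun x => cond x.2 (F x.1) (F x.1)⁻¹) w.toWord).map
            (Units.coeHom (Matrix (Fin 2) (Fin 2) K))).prod :=
          map_list_prod (Units.coeHom (Matrix (Fin 2) (Fin 2) K)) _
      _ = (w.toWord.map (mat t)).prod := by
          rw [List.map_map]
          congr 1
          apply List.map_congr_left
          intro a _
          exact mat_eq H.ht0 a
  have h4 : ((w.toWord.map (mat t)).prod : Matrix (Fin 2) (Fin 2) K) = 1 := by
    rw [← h3, h2]
  have hchain : List.Chain' Ok w.toWord := chain_ok w
  rw [hxl] at hchain h4
  have hkey := chain_step H l' x hchain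
  rw [h4, Matrix.one_mulVec] at hkey
  exact notPos H x hkey

/-- Main result of the ping-pong part. -/
theorem exists_free_pair (H : Hyp f t) :
    ∃ A B : (Matrix (Fin 2) (Fin 2) K)ˣ,
      Function.Injective
        ⇑(FreeGroup.lift (fun b : Bool => if b then A else B)) :=
  ⟨AU H.ht0, BU H.ht0, freeness H⟩

end PPong

namespace PPong

/-- Transport of free pairs along injective group homs. -/
theorem transport {G H : Type*} [Group G] [Group H] (ψ : G →* H)
    (hinj : Function.Injective ψ) (A B : G)
    (h : Function.Injective ⇑(FreeGroup.lift (fun b : Bool => if b then A else B))) :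
    Function.Injective ⇑(FreeGroup.lift (fun b : Bool => if b then ψ A else ψ B)) := by
  have heq : FreeGroup.lift (fun b : Bool => if b then ψ A else ψ B) =
      ψ.comp (FreeGroup.lift (fun b : Bool => if b then A else B)) := by
    apply FreeGroup.ext_hom
    intro a
    simp [apply_ite ψ]
  rw [heq, MonoidHom.coe_comp]
  exact hinj.comp h

theorem units_map_injective {M N : Type*} [Monoid M] [Monoid N] (φ : M →* N)
    (h : Function.Injective φ) : Function.Injective (Units.map φ) := by
  intro u v huv
  ext
  apply h
  have := congrArg (Units.val) huv
  simpa using this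

theorem mapMatrix_injective {R S : Type*} [Semiring R] [Semiring S] (φ : R →+* S)
    (h : Function.Injective φ) :
    Function.Injective (φ.mapMatrix : Matrix (Fin 2) (Fin 2) R →+* Matrix (Fin 2) (Fin 2) S) := by
  intro M N hMN
  ext i j
  apply h
  have := congrArg (fun X : Matrix (Fin 2) (Fin 2) S => X i j) hMN
  simpa [RingHom.mapMatrix_apply, Matrix.map_apply] using this

/-- The rational absolute value. -/
theorem hyp_rat : Hyp (fun q : ℚ => |(q : ℝ)|) 2 where
  nn := fun x => abs_nonneg _
  mul := fun x y => by push_cast; exact abs_mul _ _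
  addle := fun x y => by push_cast; exact abs_add_le _ _
  zero := fun x => by
    rw [abs_eq_zero]
    exact Rat.cast_eq_zero
  ft := by norm_num

open scoped Classical in
/-- The degree absolute value on rational functions. -/
theorem hyp_ratfunc (F : Type*) [Field F] :
    Hyp (fun q : RatFunc F => if q = 0 then (0 : ℝ) else (2 : ℝ) ^ q.intDegree)
      RatFunc.X where
  nn := fun x => by
    split
    · exact le_refl 0
    · positivity
  mul := fun x y => by
    rcases eq_or_ne x 0 with rfl | hx
    · simp
    rcases eq_or_ne y 0 with rfl | hy
    · simp
    rw [if_neg hx, if_neg hy, if_neg (mul_ne_zero hx hy), RatFunc.intDegree_mul hx hy,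
      zpow_add₀ (by norm_num : (2 : ℝ) ≠ 0)]
  addle := fun x y => by
    rcases eq_or_ne x 0 with rfl | hx
    · simp
    rcases eq_or_ne y 0 with rfl | hy
    · simp
    rcases eq_or_ne (x + y) 0 with hxy | hxy
    · rw [if_pos hxy, if_neg hx, if_neg hy]
      positivity
    · rw [if_neg hxy, if_neg hx, if_neg hy]
      have hle := RatFunc.intDegree_add_le hy hxy
      have h1 : (2 : ℝ) ^ (x + y).intDegree ≤
          (2 : ℝ) ^ max x.intDegree y.intDegree :=
        zpow_le_zpow_right₀ (by norm_num) hle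
      have h2 : (2 : ℝ) ^ max x.intDegree y.intDegree ≤
          (2 : ℝ) ^ x.intDegree + (2 : ℝ) ^ y.intDegree := by
        rcases max_cases x.intDegree y.intDegree with ⟨hm, _⟩ | ⟨hm, _⟩ <;> rw [hm] <;>
          [linarith [zpow_pos (by norm_num : (0:ℝ) < 2) y.intDegree];
           linarith [zpow_pos (by norm_num : (0:ℝ) < 2) x.intDegree]]
      linarith
  zero := fun x => by
    split
    · simpa
    · constructor
      · intro h
        exact absurd h (by positivity)
      · intro h
        simp_all
  ft := by
    rw [if_neg RatFunc.X_ne_zero, RatFunc.intDegree_X]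
    norm_num

end PPong

namespace PPong

theorem exists_free_pair_GL2 (k : Type*) [Field k]
    (hk : ¬ ∃ F : Subfield k, Finite F ∧ ∀ x : k, IsAlgebraic F x) :
    ∃ A B : (Matrix (Fin 2) (Fin 2) k)ˣ,
      Function.Injective
        ⇑(FreeGroup.lift (fun b : Bool => if b then A else B)) := by
  haveI : CharP k (ringChar k) := ringChar.charP k
  rcases CharP.char_is_prime_or_zero k (ringChar k) with hp | h0
  · -- positive characteristic
    haveI hfact : Fact (ringChar k).Prime := ⟨hp⟩
    set p := ringChar k with hpdef
    let c : ZMod p →+* k := ZMod.castHom (dvd_refl p) k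
    have hc : Function.Injective c := c.injective
    set F : Subfield k := c.fieldRange with hF
    haveI hFfin : Finite F := by
      have h1 : (F : Set k).Finite := by
        rw [RingHom.coe_fieldRange]
        exact Set.finite_range c
      exact h1.to_subtype
    have hex : ∃ t : k, ¬ IsAlgebraic F t := by
      by_contra hno
      push_neg at hno
      exact hk ⟨F, hFfin, hno⟩
    obtain ⟨t, ht⟩ := hex
    let φ : Polynomial (ZMod p) →+* k := Polynomial.eval₂RingHom c t
    have hφ : Function.Injective φ := by
      rw [injective_iff_map_eq_zero]
      intro q hq
      by_contra hq0
      apply ht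
      let c' : ZMod p →+* F := c.codRestrict F.toSubring (fun x => ⟨x, rfl⟩)
      have hc' : Function.Injective c' := fun a b hab => hc (by
        have := congrArg (Subtype.val) hab
        exact this)
      refine ⟨q.map c', ?_, ?_⟩
      · exact (Polynomial.map_ne_zero_iff hc').mpr hq0
      · rw [Polynomial.aeval_def, Polynomial.eval₂_map]
        have hcomp : (algebraMap F k).comp c' = c := by
          ext x
          rfl
        rw [hcomp]
        exact hq
    let emb : RatFunc (ZMod p) →+* k := IsFractionRing.lift hφ
    have hembinj : Function.Injective emb := emb.injective
    obtain ⟨A, B, hfree⟩ := exists_free_pair (hyp_ratfunc (ZMod p))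
    refine ⟨Units.map emb.mapMatrix.toMonoidHom A, Units.map emb.mapMatrix.toMonoidHom B, ?_⟩
    exact transport _ (units_map_injective _ (mapMatrix_injective emb hembinj)) A B hfree
  · -- characteristic zero
    haveI : CharP k 0 := by rwa [h0] at ‹CharP k (ringChar k)›
    haveI : CharZero k := CharP.charP_to_charZero k
    let emb : ℚ →+* k := Rat.castHom k
    have hembinj : Function.Injective emb := emb.injective
    obtain ⟨A, B, hfree⟩ := exists_free_pair hyp_rat
    refine ⟨Units.map emb.mapMatrix.toMonoidHom A, Units.map emb.mapMatrix.toMonoidHom B, ?_⟩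
    exact transport _ (units_map_injective _ (mapMatrix_injective emb hembinj)) A B hfree

end PPong

namespace RingPart

variable {R : Type*} [Ring R]

theorem sum_map_neg' {α : Type*} (l : List α) (g : α → R) :
    (l.map fun a => -(g a)).sum = -((l.map g).sum) := by
  induction l with
  | nil => simp
  | cons x l ih => simp [ih]; abel

theorem sum_map_mul_left' {α : Type*} (l : List α) (g : α → R) (r : R) :
    (l.map fun a => r * g a).sum = r * (l.map g).sum := by
  induction l with
  | nil => simp
  | cons x l ih => simp [ih, mul_add]

theorem sum_map_mul_right' {α : Type*} (l : List α) (g : α → R) (r : R) :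
    (l.map fun a => g a * r).sum = (l.map g).sum * r := by
  induction l with
  | nil => simp
  | cons x l ih => simp [ih, add_mul]

/-- In a simple ring, every nonzero element generates the whole ring as a
two-sided ideal: `1` is a finite sum of terms `p * c * q`. -/
theorem exists_list_sum_eq_one [IsSimpleRing R] {c : R} (hc : c ≠ 0) :
    ∃ l : List (R × R), (l.map fun p => p.1 * c * p.2).sum = 1 := by
  haveI := IsSimpleRing.simple (R := R)
  set S : TwoSidedIdeal R := TwoSidedIdeal.mk'
    {x | ∃ l : List (R × R), (l.map fun p => p.1 * c * p.2).sum = x}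
    ⟨[], rfl⟩
    (fun {x y} hx hy => by
      obtain ⟨l1, h1⟩ := hx
      obtain ⟨l2, h2⟩ := hy
      exact ⟨l1 ++ l2, by rw [List.map_append, List.sum_append, h1, h2]⟩)
    (fun {x} hx => by
      obtain ⟨l, h⟩ := hx
      refine ⟨l.map fun p => (-p.1, p.2), ?_⟩
      rw [List.map_map]
      have h2 : ((fun p : R × R => p.1 * c * p.2) ∘ fun p : R × R => (-p.1, p.2))
          = fun p : R × R => -(p.1 * c * p.2) := by
        funext p; simp
      rw [h2, sum_map_neg', h])
    (fun {x y} hy => by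
      obtain ⟨l, h⟩ := hy
      refine ⟨l.map fun p => (x * p.1, p.2), ?_⟩
      rw [List.map_map]
      have h2 : ((fun p : R × R => p.1 * c * p.2) ∘ fun p : R × R => (x * p.1, p.2))
          = fun p : R × R => x * (p.1 * c * p.2) := by
        funext p; simp [mul_assoc]
      rw [h2, sum_map_mul_left', h])
    (fun {x y} hx => by
      obtain ⟨l, h⟩ := hx
      refine ⟨l.map fun p => (p.1, p.2 * y), ?_⟩
      rw [List.map_map]
      have h2 : ((fun p : R × R => p.1 * c * p.2) ∘ fun p : R × R => (p.1, p.2 * y))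
          = fun p : R × R => (p.1 * c * p.2) * y := by
        funext p; simp [mul_assoc]
      rw [h2, sum_map_mul_right', h]) with hS
  have hcS : c ∈ S := by
    rw [hS, TwoSidedIdeal.mem_mk']
    exact ⟨[(1, 1)], by simp⟩
  have hSbot : S ≠ ⊥ := fun h => hc ((TwoSidedIdeal.mem_bot R).mp (h ▸ hcS))
  have hStop : S = ⊤ := (eq_bot_or_eq_top S).resolve_left hSbot
  have h1 : (1 : R) ∈ S := hStop ▸ TwoSidedIdeal.mem_top R
  rw [hS, TwoSidedIdeal.mem_mk'] at h1
  exact h1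

/-- In a left artinian ring, a left inverse is a two-sided inverse. -/
theorem mul_eq_one_symm [IsArtinianRing R] {x y : R} (h : y * x = 1) : x * y = 1 := by
  let f : R →ₗ[R] R := LinearMap.toSpanSingleton R R y
  have hf : ∀ r : R, f r = r * y := fun r => rfl
  have hinj : Function.Injective f := by
    intro a b hab
    rw [hf, hf] at hab
    have := congrArg (fun z => z * x) hab
    simpa [mul_assoc, h] using this
  have hsurj := IsArtinian.surjective_of_injective_endomorphism f hinj
  obtain ⟨z, hz⟩ := hsurj 1
  rw [hf] at hz
  have hxz : x = z := by
    calc x = 1 * x := (one_mul x).symm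
    _ = (z * y) * x := by rw [hz]
    _ = z * (y * x) := mul_assoc _ _ _
    _ = z := by rw [h, mul_one]
  rw [hxz, hz]

theorem isUnit_of_left_inverse [IsArtinianRing R] {x y : R} (h : y * x = 1) : IsUnit x :=
  ⟨⟨x, y, mul_eq_one_symm h, h⟩, rfl⟩

theorem exists_atom_le [IsArtinianRing R] {J : Ideal R} (hJ : J ≠ ⊥) :
    ∃ I : Ideal R, IsAtom I ∧ I ≤ J := by
  haveI : IsAtomic (Ideal R) := isAtomic_of_orderBot_wellFounded_lt wellFounded_lt
  rcases IsAtomic.eq_bot_or_exists_atom_le J with h | h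
  · exact absurd h hJ
  · exact h

end RingPart

namespace RingPart

variable {R : Type*} [Ring R]

theorem exists_trio [IsSimpleRing R] [IsArtinianRing R]
    (hdiv : ¬ ∀ x : R, x ≠ 0 → IsUnit x) :
    ∃ e a b : R, e * e = e ∧ a * e = a ∧ e * a = 0 ∧ e * b = b ∧ b * e = 0 ∧
      b * a = e ∧ a * a = 0 ∧ b * b = 0 ∧ e ≠ 0 ∧ a ≠ 0 := by
  push_neg at hdiv
  obtain ⟨x, hx0, hxnu⟩ := hdiv
  set J : Ideal R := Ideal.span {x} with hJ
  have hJtop : J ≠ ⊤ := by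
    intro h
    have h1 : (1 : R) ∈ J := h ▸ Submodule.mem_top
    rw [hJ, Ideal.span, Submodule.mem_span_singleton] at h1
    obtain ⟨r, hr⟩ := h1
    rw [smul_eq_mul] at hr
    exact hxnu (isUnit_of_left_inverse hr)
  have hxJ : x ∈ J := Ideal.subset_span rfl
  have hJbot : J ≠ ⊥ := fun h => hx0 (Submodule.mem_bot R |>.mp (h ▸ hxJ))
  obtain ⟨I, hIatom, hIJ⟩ := exists_atom_le hJbot
  have hIbot : I ≠ ⊥ := hIatom.1
  -- I² ≠ 0
  have hA : ∃ u ∈ I, ∃ d ∈ I, d * u ≠ 0 := by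
    by_contra hno
    push_neg at hno
    obtain ⟨c, hcI, hc0⟩ := Submodule.exists_mem_ne_zero_of_ne_bot hIbot
    have hrc : ∀ r : R, c * (r * c) = 0 := by
      intro r
      have h1 : r * c ∈ I := by
        have := I.smul_mem r hcI
        rwa [smul_eq_mul] at this
      exact hno (r * c) h1 c hcI
    obtain ⟨l, hl⟩ := exists_list_sum_eq_one hc0
    apply hc0
    calc c = c * 1 := (mul_one c).symm
    _ = c * (l.map fun p => p.1 * c * p.2).sum := by rw [hl]
    _ = (l.map fun p => c * (p.1 * c * p.2)).sum := (sum_map_mul_left' l _ c).symm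
    _ = 0 := by
        apply List.sum_eq_zero
        intro y hy
        rw [List.mem_map] at hy
        obtain ⟨p, _, rfl⟩ := hy
        calc c * (p.1 * c * p.2) = (c * (p.1 * c)) * p.2 := by noncomm_ring
        _ = 0 := by rw [hrc p.1, zero_mul]
  obtain ⟨u, huI, d, hdI, hdu⟩ := hA
  have hu0 : u ≠ 0 := fun h => hdu (by rw [h, mul_zero])
  -- the annihilator of u inside I is ⊥
  set T : R →ₗ[R] R := LinearMap.toSpanSingleton R R u with hT
  have hTapp : ∀ r : R, T r = r * u := fun r => rfl
  set Kk : Ideal R := I ⊓ LinearMap.ker T with hKk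
  have hKI : Kk ≤ I := inf_le_left
  have hKne : Kk ≠ I := by
    intro h
    have hd : d ∈ Kk := h.symm ▸ hdI
    have : T d = 0 := hd.2
    rw [hTapp] at this
    exact hdu this
  have hKbot : Kk = ⊥ := hIatom.2 Kk (lt_of_le_of_ne hKI hKne)
  -- I·u = I
  set I' : Ideal R := Submodule.map T I with hI'
  have hI'leI : I' ≤ I := by
    rintro _ ⟨r, hr, rfl⟩
    have := I.smul_mem r huI
    rwa [smul_eq_mul, ← hTapp] at this
  have hI'bot : I' ≠ ⊥ := by
    intro h
    apply hdu
    have hmem : T d ∈ I' := Submodule.mem_map_of_mem hdI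
    rw [h, Submodule.mem_bot] at hmem
    rwa [hTapp] at hmem
  have hI'eq : I' = I := ((hIatom.le_iff.mp hI'leI).resolve_left hI'bot)
  have huI' : u ∈ I' := hI'eq.symm ▸ huI
  obtain ⟨e, heI, heu⟩ := huI'
  rw [hTapp] at heu
  have he0 : e ≠ 0 := fun h => hu0 (by rw [← heu, h, zero_mul])
  have hidem : e * e = e := by
    have hmem : e * e - e ∈ Kk := by
      refine Submodule.mem_inf.mpr ⟨?_, ?_⟩
      · apply I.sub_mem _ heI
        have := I.smul_mem e heI
        rwa [smul_eq_mul] at this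
      · rw [LinearMap.mem_ker, hTapp, sub_mul, mul_assoc, heu, heu, sub_self]
    rw [hKbot, Submodule.mem_bot] at hmem
    exact sub_eq_zero.mp hmem
  have hIe : Ideal.span {e} = I := by
    have hle : Ideal.span {e} ≤ I := Ideal.span_le.mpr (Set.singleton_subset_iff.mpr heI)
    have hne : Ideal.span {e} ≠ ⊥ := fun h =>
      he0 (Submodule.mem_bot R |>.mp (h ▸ Ideal.subset_span rfl))
    exact (hIatom.le_iff.mp hle).resolve_left hne
  have he1 : e ≠ 1 := by
    intro h
    apply hJtop
    rw [eq_top_iff]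
    intro y _
    have h1 : (1 : R) ∈ I := h ▸ heI
    have : y ∈ I := by
      have := I.smul_mem y h1
      rwa [smul_eq_mul, mul_one] at this
    exact hIJ this
  have hf0 : (1 : R) - e ≠ 0 := sub_ne_zero.mpr (Ne.symm he1)
  have hef : e * (1 - e) = 0 := by rw [mul_sub, mul_one, hidem, sub_self]
  have hfe : (1 - e) * e = 0 := by rw [sub_mul, one_mul, hidem, sub_self]
  -- find a = (1-e) r e ≠ 0
  have hB : ∃ r : R, (1 - e) * r * e ≠ 0 := by
    by_contra hno
    push_neg at hno
    obtain ⟨l, hl⟩ := exists_list_sum_eq_one he0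
    apply hf0
    calc (1 : R) - e = (1 - e) * 1 := (mul_one _).symm
    _ = (1 - e) * (l.map fun p => p.1 * e * p.2).sum := by rw [hl]
    _ = (l.map fun p => (1 - e) * (p.1 * e * p.2)).sum := (sum_map_mul_left' l _ _).symm
    _ = 0 := by
        apply List.sum_eq_zero
        intro y hy
        rw [List.mem_map] at hy
        obtain ⟨p, _, rfl⟩ := hy
        calc (1 - e) * (p.1 * e * p.2) = ((1 - e) * p.1 * e) * p.2 := by noncomm_ring
        _ = 0 := by rw [hno p.1, zero_mul]
  obtain ⟨r, ha0⟩ := hB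
  set a : R := (1 - e) * r * e with hadef
  have hae : a * e = a := by rw [hadef, mul_assoc ((1 - e) * r), hidem]
  have hea : e * a = 0 := by
    rw [hadef, ← mul_assoc e, ← mul_assoc e, hef, zero_mul, zero_mul]
  have hfa : (1 - e) * a = a := by
    rw [sub_mul, one_mul, hea, sub_zero]
  have haf : a * (1 - e) = 0 := by rw [mul_sub, mul_one, hae, sub_self]
  have haa : a * a = 0 := by
    have h2 : a = (1 - e) * (r * e) := by rw [hadef, mul_assoc]
    nth_rewrite 2 [h2]
    rw [← mul_assoc, haf, zero_mul]
  -- find b₀ = e r' (1-e) ≠ 0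
  have hC : ∃ r' : R, e * r' * (1 - e) ≠ 0 := by
    by_contra hno
    push_neg at hno
    obtain ⟨l, hl⟩ := exists_list_sum_eq_one hf0
    apply he0
    calc e = e * 1 := (mul_one _).symm
    _ = e * (l.map fun p => p.1 * (1 - e) * p.2).sum := by rw [hl]
    _ = (l.map fun p => e * (p.1 * (1 - e) * p.2)).sum := (sum_map_mul_left' l _ _).symm
    _ = 0 := by
        apply List.sum_eq_zero
        intro y hy
        rw [List.mem_map] at hy
        obtain ⟨p, _, rfl⟩ := hy
        calc e * (p.1 * (1 - e) * p.2) = (e * p.1 * (1 - e)) * p.2 := by noncomm_ring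
        _ = 0 := by rw [hno p.1, zero_mul]
  obtain ⟨r', hb₀0⟩ := hC
  set b₀ : R := e * r' * (1 - e) with hb₀def
  have heb₀ : e * b₀ = b₀ := by
    rw [hb₀def, ← mul_assoc e, ← mul_assoc e, hidem]
  have hb₀e : b₀ * e = 0 := by
    rw [hb₀def, mul_assoc (e * r'), hfe, mul_zero]
  -- find s with b₀ s a ≠ 0
  have hD : ∃ s : R, b₀ * s * a ≠ 0 := by
    by_contra hno
    push_neg at hno
    obtain ⟨l, hl⟩ := exists_list_sum_eq_one ha0
    apply hb₀0
    calc b₀ = b₀ * 1 := (mul_one _).symm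
    _ = b₀ * (l.map fun p => p.1 * a * p.2).sum := by rw [hl]
    _ = (l.map fun p => b₀ * (p.1 * a * p.2)).sum := (sum_map_mul_left' l _ _).symm
    _ = 0 := by
        apply List.sum_eq_zero
        intro y hy
        rw [List.mem_map] at hy
        obtain ⟨p, _, rfl⟩ := hy
        calc b₀ * (p.1 * a * p.2) = (b₀ * p.1 * a) * p.2 := by noncomm_ring
        _ = 0 := by rw [hno p.1, zero_mul]
  obtain ⟨s, hε0⟩ := hD
  set b₁ : R := b₀ * s * (1 - e) with hb₁def
  have hb₁a : b₁ * a = b₀ * s * a := by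
    rw [hb₁def, mul_assoc (b₀ * s), hfa]
  have heb₁ : e * b₁ = b₁ := by
    rw [hb₁def, ← mul_assoc e, ← mul_assoc e, heb₀]
  have hb₁e : b₁ * e = 0 := by
    rw [hb₁def, mul_assoc (b₀ * s), hfe, mul_zero]
  set ε : R := b₁ * a with hεdef
  have hεne : ε ≠ 0 := by rw [hb₁a]; exact hε0
  have hεe : ε * e = ε := by rw [hεdef, mul_assoc, hae]
  have hεI : ε ∈ I := by
    rw [← hIe, Ideal.span, Submodule.mem_span_singleton]
    exact ⟨ε, by rw [smul_eq_mul, hεe]⟩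
  have hspanε : Ideal.span {ε} = I := by
    have hle : Ideal.span {ε} ≤ I := Ideal.span_le.mpr (Set.singleton_subset_iff.mpr hεI)
    have hne : Ideal.span {ε} ≠ ⊥ := fun h =>
      hεne (Submodule.mem_bot R |>.mp (h ▸ Ideal.subset_span rfl))
    exact (hIatom.le_iff.mp hle).resolve_left hne
  have heε : e ∈ Ideal.span {ε} := hspanε.symm ▸ heI
  rw [Ideal.span, Submodule.mem_span_singleton] at heε
  obtain ⟨w, hw⟩ := heε
  rw [smul_eq_mul] at hw
  set b : R := e * w * b₁ with hbdef
  have hba : b * a = e := by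
    calc b * a = e * w * (b₁ * a) := by rw [hbdef, mul_assoc (e * w)]
    _ = e * (w * ε) := by rw [hεdef, mul_assoc]
    _ = e * e := by rw [hw]
    _ = e := hidem
  have heb : e * b = b := by
    rw [hbdef, ← mul_assoc e, ← mul_assoc e, hidem]
  have hbe : b * e = 0 := by
    rw [hbdef, mul_assoc (e * w), hb₁e, mul_zero]
  have hbb : b * b = 0 := by
    have h2 : b = e * (w * b₁) := by rw [hbdef, mul_assoc]
    nth_rewrite 2 [h2]
    rw [← mul_assoc, hbe, zero_mul]
  exact ⟨e, a, b, hidem, hae, hea, heb, hbe, hba, haa, hbb, he0, ha0⟩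

end RingPart

namespace RingPart

structure Trio (R : Type*) [Ring R] where
  e : R
  a : R
  b : R
  idem : e * e = e
  ae : a * e = a
  ea : e * a = 0
  eb : e * b = b
  be : b * e = 0
  ba : b * a = e
  aa : a * a = 0
  bb : b * b = 0
  e0 : e ≠ 0
  a0 : a ≠ 0

namespace Trio

variable {R : Type*} [Ring R] (T : Trio R)

theorem ab_idem : (T.a * T.b) * (T.a * T.b) = T.a * T.b := by
  rw [mul_assoc T.a T.b, ← mul_assoc T.b, T.ba, T.eb]

theorem a_ab : T.a * (T.a * T.b) = 0 := by rw [← mul_assoc, T.aa, zero_mul]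

theorem ab_a : (T.a * T.b) * T.a = T.a := by rw [mul_assoc, T.ba, T.ae]

theorem b_ab : T.b * (T.a * T.b) = T.b := by rw [← mul_assoc, T.ba, T.eb]

theorem ab_b : (T.a * T.b) * T.b = 0 := by rw [mul_assoc, T.bb, mul_zero]

theorem e_ab : T.e * (T.a * T.b) = 0 := by rw [← mul_assoc, T.ea, zero_mul]

theorem ab_e : (T.a * T.b) * T.e = 0 := by rw [mul_assoc, T.be, mul_zero]

theorem ab0 : T.a * T.b ≠ 0 := by
  intro h
  apply T.a0
  calc T.a = (T.a * T.b) * T.a := (T.ab_a).symm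
  _ = 0 := by rw [h, zero_mul]

theorem b0 : T.b ≠ 0 := by
  intro h
  apply T.e0
  rw [← T.ba, h, zero_mul]

/-- The idempotent `g₁ = e + ab`. -/
def g1 : R := T.e + T.a * T.b

theorem g1_idem : T.g1 * T.g1 = T.g1 := by
  rw [g1, mul_add, add_mul, add_mul, T.idem, T.e_ab, T.ab_e, T.ab_idem]
  abel

theorem e_g1 : T.e * T.g1 = T.e := by rw [g1, mul_add, T.idem, T.e_ab, add_zero]

theorem a_g1 : T.a * T.g1 = T.a := by rw [g1, mul_add, T.ae, T.a_ab, add_zero]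

theorem b_g1 : T.b * T.g1 = T.b := by rw [g1, mul_add, T.be, T.b_ab, zero_add]

theorem ab_g1 : (T.a * T.b) * T.g1 = T.a * T.b := by
  rw [g1, mul_add, T.ab_e, T.ab_idem, zero_add]

theorem g1_e : T.g1 * T.e = T.e := by rw [g1, add_mul, T.idem, T.ab_e, add_zero]

theorem g1_a : T.g1 * T.a = T.a := by rw [g1, add_mul, T.ea, T.ab_a, zero_add]

theorem g1_b : T.g1 * T.b = T.b := by rw [g1, add_mul, T.eb, T.ab_b, add_zero]

theorem g1_ab : T.g1 * (T.a * T.b) = T.a * T.b := by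
  rw [g1, add_mul, T.e_ab, T.ab_idem, zero_add]

end Trio

section Phi

variable {k R : Type*} [Field k] [Ring R] [Algebra k R] (T : Trio R)

/-- The additive embedding of 2×2 matrices using the matrix units. -/
def phi (M : Matrix (Fin 2) (Fin 2) k) : R :=
  algebraMap k R (M 0 0) * T.e + algebraMap k R (M 0 1) * T.b +
    algebraMap k R (M 1 0) * T.a + algebraMap k R (M 1 1) * (T.a * T.b)

theorem lmul_scal (c : k) (X Y : R) :
    Y * (algebraMap k R c * X) = algebraMap k R c * (Y * X) := by
  rw [← mul_assoc, ← Algebra.commutes, mul_assoc]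

theorem e_scal (c : k) (X : R) :
    T.e * (algebraMap k R c * X) = algebraMap k R c * (T.e * X) := lmul_scal c X T.e

theorem a_scal (c : k) (X : R) :
    T.a * (algebraMap k R c * X) = algebraMap k R c * (T.a * X) := lmul_scal c X T.a

theorem b_scal (c : k) (X : R) :
    T.b * (algebraMap k R c * X) = algebraMap k R c * (T.b * X) := lmul_scal c X T.b

theorem scal_mul_scal (c d : k) (X Y : R) :
    (algebraMap k R c * X) * (algebraMap k R d * Y) =
      algebraMap k R (c * d) * (X * Y) := by
  rw [map_mul, mul_assoc, lmul_scal, ← mul_assoc, ← mul_assoc]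

theorem phi_mul (M N : Matrix (Fin 2) (Fin 2) k) :
    phi T (M * N) = phi T M * phi T N := by
  have h1 := T.idem
  have h2 := T.ae
  have h3 := T.ea
  have h4 := T.eb
  have h5 := T.be
  have h6 := T.ba
  have h7 := T.aa
  have h8 := T.bb
  simp only [phi, Matrix.mul_apply, Fin.sum_univ_two, map_add, map_mul, add_mul, mul_add,
    scal_mul_scal, e_scal, a_scal, b_scal, h1, h2, h3, h4, h5, h6, h7, h8, T.ab_idem, T.a_ab, T.ab_a,
    T.b_ab, T.ab_b, T.e_ab, T.ab_e, mul_zero, zero_mul, add_zero, zero_add, mul_assoc]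
  abel

theorem phi_one : phi T (1 : Matrix (Fin 2) (Fin 2) k) = T.g1 := by
  simp [phi, Matrix.one_apply, Trio.g1]

theorem phi_sub (M N : Matrix (Fin 2) (Fin 2) k) : phi T (M - N) = phi T M - phi T N := by
  simp only [phi, Matrix.sub_apply, map_sub, sub_mul]
  abel

theorem phi_g1_right (M : Matrix (Fin 2) (Fin 2) k) : phi T M * T.g1 = phi T M := by
  simp only [phi, add_mul, mul_assoc, T.e_g1, T.a_g1, T.b_g1, T.ab_g1]

theorem phi_g1_left (M : Matrix (Fin 2) (Fin 2) k) : T.g1 * phi T M = phi T M := by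
  simp only [phi, mul_add, lmul_scal, T.g1_e, T.g1_a, T.g1_b, T.g1_ab]

theorem scal_cancel {c : k} {X : R} (hX : X ≠ 0) (h : algebraMap k R c * X = 0) : c = 0 := by
  by_contra hc
  apply hX
  calc X = (algebraMap k R c⁻¹ * algebraMap k R c) * X := by
        rw [← map_mul, inv_mul_cancel₀ hc, map_one, one_mul]
  _ = algebraMap k R c⁻¹ * (algebraMap k R c * X) := by rw [mul_assoc]
  _ = 0 := by rw [h, mul_zero]

theorem phi_zero_imp (C : Matrix (Fin 2) (Fin 2) k) (hMN : phi T C = 0) : C = 0 := by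
  have s00 : T.e * (phi T C * T.e) = algebraMap k R (C 0 0) * T.e := by
    simp only [phi, mul_add, add_mul, e_scal, a_scal, b_scal, mul_assoc, T.idem, T.ea, T.eb, T.be, T.ba,
      T.aa, T.bb, T.ae, T.a_ab, T.b_ab, T.e_ab, mul_zero, zero_mul, add_zero, zero_add]
  have s01 : T.e * (phi T C * (T.a * T.b)) = algebraMap k R (C 0 1) * T.b := by
    simp only [phi, mul_add, add_mul, e_scal, a_scal, b_scal, mul_assoc, T.idem, T.ea, T.eb, T.be, T.ba,
      T.aa, T.bb, T.ae, T.a_ab, T.b_ab, T.e_ab, mul_zero, zero_mul, add_zero, zero_add]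
  have s10 : (T.a * T.b) * (phi T C * T.e) = algebraMap k R (C 1 0) * T.a := by
    simp only [phi, mul_add, add_mul, e_scal, a_scal, b_scal, mul_assoc, T.idem, T.ea, T.eb, T.be, T.ba,
      T.aa, T.bb, T.ae, T.a_ab, T.b_ab, T.e_ab, mul_zero, zero_mul, add_zero, zero_add]
  have s11 : (T.a * T.b) * (phi T C * (T.a * T.b)) =
      algebraMap k R (C 1 1) * (T.a * T.b) := by
    simp only [phi, mul_add, add_mul, e_scal, a_scal, b_scal, mul_assoc, T.idem, T.ea, T.eb, T.be, T.ba,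
      T.aa, T.bb, T.ae, T.a_ab, T.b_ab, T.e_ab, mul_zero, zero_mul, add_zero, zero_add]
  rw [hMN, zero_mul, mul_zero] at s00 s01
  rw [hMN, zero_mul, mul_zero] at s10 s11
  have h00 : C 0 0 = 0 := scal_cancel T.e0 s00.symm
  have h01 : C 0 1 = 0 := scal_cancel T.b0 s01.symm
  have h10 : C 1 0 = 0 := scal_cancel T.a0 s10.symm
  have h11 : C 1 1 = 0 := scal_cancel T.ab0 s11.symm
  ext i j
  fin_cases i <;> fin_cases j <;> simpa using ‹_›

theorem phi_injective : Function.Injective (phi T (k := k)) := by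
  intro M N h
  have hMN : phi T (M - N) = 0 := by rw [phi_sub, h, sub_self]
  have := phi_zero_imp T _ hMN
  exact sub_eq_zero.mp this

end Phi

end RingPart

namespace RingPart

section PhiU

variable {k R : Type*} [Field k] [Ring R] [Algebra k R] (T : Trio R)

/-- The unital map `M₂(k) → R`, `M ↦ φ(M) + (1 - g₁)`. -/
def Phi (M : Matrix (Fin 2) (Fin 2) k) : R := phi T M + (1 - T.g1)

theorem Phi_mul (M N : Matrix (Fin 2) (Fin 2) k) :
    Phi T (M * N) = Phi T M * Phi T N := by
  have hxu : phi T M * (1 - T.g1) = 0 := by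
    rw [mul_sub, mul_one, phi_g1_right, sub_self]
  have huy : (1 - T.g1) * phi T N = 0 := by
    rw [sub_mul, one_mul, phi_g1_left, sub_self]
  have huu : ((1 : R) - T.g1) * (1 - T.g1) = 1 - T.g1 := by
    rw [mul_sub, mul_one, sub_mul, one_mul, T.g1_idem]
    abel
  rw [Phi, Phi, Phi, add_mul, mul_add, mul_add, hxu, huy, huu, phi_mul]
  abel

theorem Phi_one : Phi T (1 : Matrix (Fin 2) (Fin 2) k) = 1 := by
  rw [Phi, phi_one]
  abel

theorem Phi_injective : Function.Injective (Phi T (k := k)) := by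
  intro M N h
  apply phi_injective T
  have := add_right_cancel h
  exact this

/-- The group homomorphism `GL₂(k) → Rˣ`. -/
def PhiUnits : (Matrix (Fin 2) (Fin 2) k)ˣ →* Rˣ where
  toFun u := ⟨Phi T u.val, Phi T u.inv,
    by rw [← Phi_mul, u.val_inv, Phi_one],
    by rw [← Phi_mul, u.inv_val, Phi_one]⟩
  map_one' := by
    apply Units.ext
    exact Phi_one T
  map_mul' u v := by
    apply Units.ext
    exact Phi_mul T u.val v.val

theorem PhiUnits_injective : Function.Injective (PhiUnits T (k := k)) := by
  intro u v h
  apply Units.ext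
  apply Phi_injective T
  exact congrArg Units.val h

end PhiU

theorem exists_units_hom (k R : Type*) [Field k] [Ring R] [Algebra k R] [IsSimpleRing R]
    [IsArtinianRing R] (hdiv : ¬ ∀ x : R, x ≠ 0 → IsUnit x) :
    ∃ ψ : (Matrix (Fin 2) (Fin 2) k)ˣ →* Rˣ, Function.Injective ψ := by
  obtain ⟨e, a, b, h1, h2, h3, h4, h5, h6, h7, h8, h9, h10⟩ := exists_trio hdiv
  exact ⟨PhiUnits ⟨e, a, b, h1, h2, h3, h4, h5, h6, h7, h8, h9, h10⟩,
    PhiUnits_injective _⟩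

end RingPart

namespace SemiPart

theorem reduce_pos (l : List Bool) :
    FreeGroup.reduce (l.map fun b => (b, true)) = l.map fun b => (b, true) := by
  induction l with
  | nil => rfl
  | cons b l ih =>
    rw [List.map_cons, FreeGroup.reduce.cons, ih]
    cases l with
    | nil => rfl
    | cons c l' => simp

theorem j_repr (s : FreeSemigroup Bool) :
    FreeSemigroup.lift (FreeGroup.of (α := Bool)) s =
      FreeGroup.mk ((s.head :: s.tail).map fun b => (b, true)) := by
  induction s using FreeSemigroup.recOnMul with
  | ih1 b => rfl
  | ih2 u v ihu ihv =>
    rw [map_mul, ihu, ihv, FreeGroup.mul_mk]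
    congr 1

theorem j_injective : Function.Injective (FreeSemigroup.lift (FreeGroup.of (α := Bool))) := by
  intro s s' h
  rw [j_repr, j_repr] at h
  have h2 := congrArg FreeGroup.toWord h
  rw [FreeGroup.toWord_mk, FreeGroup.toWord_mk, reduce_pos, reduce_pos] at h2
  have h3 : (s.head :: s.tail) = (s'.head :: s'.tail) :=
    List.map_injective_iff.mpr (fun a b hab => by
      simpa using congrArg Prod.fst hab) h2
  obtain ⟨sh, st⟩ := s
  obtain ⟨sh', st'⟩ := s'
  simp only [List.cons.injEq] at h3
  simp [h3.1, h3.2]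

theorem semigroup_of_group {M : Type*} [Monoid M] (x y : Mˣ)
    (h : Function.Injective ⇑(FreeGroup.lift (fun b : Bool => if b then x else y))) :
    Function.Injective
      ⇑(FreeSemigroup.lift (fun b : Bool => if b then (x : M) else (y : M))) := by
  set j : FreeSemigroup Bool →ₙ* FreeGroup Bool := FreeSemigroup.lift FreeGroup.of with hj
  set Γ : FreeGroup Bool →* Mˣ := FreeGroup.lift (fun b : Bool => if b then x else y) with hΓ
  have hcomp : FreeSemigroup.lift (fun b : Bool => if b then (x : M) else (y : M)) =
      (((Units.coeHom M).comp Γ).toMulHom).comp j := by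
    apply FreeSemigroup.hom_ext
    funext b
    cases b <;> simp [hj, hΓ]
  rw [hcomp]
  intro s s' hss
  apply j_injective
  apply h
  apply Units.ext
  exact hss

end SemiPart

/-- If `k` is a field not algebraic over a finite subfield and `R` is a simple
left artinian `k`-algebra which is not a division ring, then the group of
units of `R` contains a free noncyclic subgroup; in particular `R` contains a
free noncyclic subsemigroup. -/
theorem simple_artinian_not_division_has_free_subgroup
    {k R : Type*} [Field k] (hk : NotAlgebraicOverFiniteSubfield k)
    [Ring R] [Algebra k R] [IsSimpleRing R] [IsArtinianRing R]
    (hdiv : ¬ ∀ x : R, x ≠ 0 → IsUnit x) :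
    HasFreeNoncyclicSubgroup Rˣ ∧ HasFreeNoncyclicSubsemigroup R := by
  obtain ⟨ψ, hψ⟩ := RingPart.exists_units_hom k R hdiv
  obtain ⟨A, B, hfree⟩ := PPong.exists_free_pair_GL2 k hk
  have hgfree := PPong.transport ψ hψ A B hfree
  exact ⟨⟨ψ A, ψ B, hgfree⟩,
    ⟨((ψ A : Rˣ) : R), ((ψ B : Rˣ) : R),
      SemiPart.semigroup_of_group (ψ A) (ψ B) hgfree⟩⟩
end
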